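/- arXiv:1511.00711 — 4 statements merged into one kernel-verified Lean document; each statement's English description precedes it below -/
import Mathlib

section
/- Let q > 1 be a real number and n ≥ 1, t ≥ 0, u ≥ 0 integers with t + u < n. Then Σ_{d=0}^{min(t,u)} (−1)^d q^{binom(d+1,2)−2d} [n−1 choose d]_q · ([t]!_q·[n−d−1]!_q)/([t−d]!_q·[n−1]!_q) · ([u]!_q·[n−d−1]!_q)/([u−d]!_q·[n−1]!_q) = q^{tu−t−u} · ([n−t−1]!_q·[n−u−1]!_q)/([n−t−u]!_q·[n−1]!_q) · (q^n − q^t − q^u + 1)/(q−1). -/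
/-- The `q`-integer `[m]_q = 1 + q + ⋯ + q^{m-1}`. -/
noncomputable def qInt (q : ℝ) (m : ℕ) : ℝ := ∑ i ∈ Finset.range m, q ^ i

/-- The `q`-factorial `[m]!_q = [1]_q [2]_q ⋯ [m]_q`. -/
noncomputable def qFact (q : ℝ) (m : ℕ) : ℝ := ∏ i ∈ Finset.range m, qInt q (i + 1)

/-- The `q`-binomial coefficient `[n choose k]_q = [n]!_q / ([k]!_q [n-k]!_q)`. -/
noncomputable def qBinom (q : ℝ) (n k : ℕ) : ℝ := qFact q n / (qFact q k * qFact q (n - k))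

section BtuAux

variable {q : ℝ}

/-- q-falling factorial `[a][a-1]⋯[a-d+1]`. -/
noncomputable def qff (q : ℝ) (a d : ℕ) : ℝ := ∏ i ∈ Finset.range d, qInt q (a - i)


lemma qInt_zero : qInt q 0 = 0 := by simp [qInt]

lemma qInt_pos (hq : 1 < q) {m : ℕ} (hm : 1 ≤ m) : 0 < qInt q m := by
  have hq0 : (0:ℝ) < q := lt_trans one_pos hq
  exact Finset.sum_pos (fun i _ => pow_pos hq0 i) (Finset.nonempty_range_iff.mpr (by omega))

lemma qInt_add (a b : ℕ) : qInt q (a + b) = qInt q a + q ^ a * qInt q b := by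
  unfold qInt
  rw [Finset.sum_range_add, Finset.mul_sum]
  simp [pow_add]

lemma qInt_geom (m : ℕ) : (q - 1) * qInt q m = q ^ m - 1 := by
  rw [mul_comm]; exact geom_sum_mul q m

lemma qFact_zero : qFact q 0 = 1 := by simp [qFact]

lemma qFact_succ (m : ℕ) : qFact q (m + 1) = qFact q m * qInt q (m + 1) :=
  Finset.prod_range_succ _ _

lemma qFact_pos (hq : 1 < q) (m : ℕ) : 0 < qFact q m :=
  Finset.prod_pos fun i _ => qInt_pos hq (by omega)

lemma qff_zero (a : ℕ) : qff q a 0 = 1 := by simp [qff]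

lemma qff_pos (hq : 1 < q) {a d : ℕ} (h : d ≤ a) : 0 < qff q a d :=
  Finset.prod_pos fun i hi => qInt_pos hq (by simp only [Finset.mem_range] at hi; omega)

lemma qff_eq_zero {a d : ℕ} (h : a < d) : qff q a d = 0 :=
  Finset.prod_eq_zero (Finset.mem_range.mpr h) (by simp [qInt_zero])

lemma qff_succ (a d : ℕ) : qff q a (d + 1) = qff q a d * qInt q (a - d) :=
  Finset.prod_range_succ _ _

lemma qff_succ_left (a d : ℕ) : qff q a (d + 1) = qInt q a * qff q (a - 1) d := by
  unfold qff
  rw [Finset.prod_range_succ', mul_comm]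
  congr 1
  exact Finset.prod_congr rfl fun i _ => by congr 1 <;> omega

lemma qFact_split {a d : ℕ} (h : d ≤ a) : qFact q a = qff q a d * qFact q (a - d) := by
  induction d with
  | zero => simp [qff_zero]
  | succ k ih =>
    rw [qff_succ, ih (by omega)]
    have h1 : a - k = (a - (k + 1)) + 1 := by omega
    rw [h1, qFact_succ, ← h1]
    ring

lemma qff_u_succ (u d : ℕ) :
    qff q (u + 1) d = qff q u d + q ^ (u + 1 - d) * qInt q d * qff q u (d - 1) := by
  cases d with
  | zero => simp [qff_zero, qInt_zero]
  | succ e =>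
    by_cases he : e ≤ u
    · rw [qff_succ_left, Nat.add_sub_cancel, qff_succ, Nat.succ_sub_one]
      have h1 : qInt q (u + 1) = qInt q (u - e) + q ^ (u - e) * qInt q (e + 1) := by
        rw [← qInt_add]; congr 1 <;> omega
      have h2 : u + 1 - (e + 1) = u - e := by omega
      rw [h1, h2]; ring
    · rw [qff_eq_zero (by omega), qff_eq_zero (show u < e + 1 by omega),
        Nat.succ_sub_one, qff_eq_zero (show u < e by omega)]
      ring

lemma nat_tri (d : ℕ) : d * (d + 1) / 2 = d * (d - 1) / 2 + d := by
  cases d with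
  | zero => rfl
  | succ k =>
    have hb : (k + 1) * ((k + 1) - 1) = k * (k + 1) := by simp [Nat.mul_comm]
    obtain ⟨c, hc⟩ := Nat.even_mul_succ_self k
    have ha : (k + 1) * (k + 1 + 1) = k * (k + 1) + 2 * (k + 1) := by ring
    omega

lemma qv (hq : 1 < q) :
    ∀ u n t : ℕ, t + u < n →
    ∑ d ∈ Finset.range (t + 1),
      (-1 : ℝ) ^ d * q ^ (d * (d - 1) / 2) * qff q t d * qff q u d /
        (qFact q d * qff q (n - 1) d)
    = q ^ (t * u) * qff q (n - 1 - u) t / qff q (n - 1) t := by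
  intro u
  induction u with
  | zero =>
    intro n t h
    rw [Finset.sum_eq_single_of_mem 0 (Finset.mem_range.mpr (by omega))
      (fun d _ hd => by rw [qff_eq_zero (show 0 < d by omega)]; ring)]
    have hne : qff q (n - 1) t ≠ 0 := ne_of_gt (qff_pos hq (by omega))
    simp only [pow_zero, qff_zero, qFact_zero, Nat.mul_zero, Nat.sub_zero, Nat.zero_mul]
    norm_num [div_self hne]
  | succ v ih =>
    intro n t h
    -- termwise expansion in u
    have hsplit : ∀ d ∈ Finset.range (t + 1),
        (-1 : ℝ) ^ d * q ^ (d * (d - 1) / 2) * qff q t d * qff q (v + 1) d /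
          (qFact q d * qff q (n - 1) d)
        = (-1 : ℝ) ^ d * q ^ (d * (d - 1) / 2) * qff q t d * qff q v d /
            (qFact q d * qff q (n - 1) d)
          + (-1 : ℝ) ^ d * q ^ (d * (d - 1) / 2) * qff q t d *
              (q ^ (v + 1 - d) * qInt q d * qff q v (d - 1)) /
            (qFact q d * qff q (n - 1) d) := by
      intro d _
      rw [qff_u_succ]; ring
    rw [Finset.sum_congr rfl hsplit, Finset.sum_add_distrib]
    rw [ih n t (by omega)]
    -- the correction sum
    have hcorr : ∑ d ∈ Finset.range (t + 1),
        (-1 : ℝ) ^ d * q ^ (d * (d - 1) / 2) * qff q t d *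
            (q ^ (v + 1 - d) * qInt q d * qff q v (d - 1)) /
          (qFact q d * qff q (n - 1) d)
        = -(q ^ v * qInt q t / qInt q (n - 1)) *
            ∑ e ∈ Finset.range t,
              (-1 : ℝ) ^ e * q ^ (e * (e - 1) / 2) * qff q (t - 1) e * qff q v e /
                (qFact q e * qff q (n - 2) e) := by
      rw [Finset.sum_range_succ']
      simp only [Nat.sub_zero, qInt_zero, qff_zero, pow_zero]
      rw [Finset.mul_sum]
      have : ∀ e ∈ Finset.range t,
          (-1 : ℝ) ^ (e + 1) * q ^ ((e + 1) * (e + 1 - 1) / 2) * qff q t (e + 1) *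
              (q ^ (v + 1 - (e + 1)) * qInt q (e + 1) * qff q v (e + 1 - 1)) /
            (qFact q (e + 1) * qff q (n - 1) (e + 1))
          = -(q ^ v * qInt q t / qInt q (n - 1)) *
              ((-1 : ℝ) ^ e * q ^ (e * (e - 1) / 2) * qff q (t - 1) e * qff q v e /
                (qFact q e * qff q (n - 2) e)) := by
        intro e he
        by_cases hev : e ≤ v
        · have h1 : (e + 1) * (e + 1 - 1) / 2 = e * (e - 1) / 2 + e := by
            rw [Nat.add_sub_cancel, Nat.mul_comm]; exact nat_tri e
          have h2 : v + 1 - (e + 1) = v - e := by omega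
          have h3 : q ^ e * q ^ (v - e) = q ^ v := by
            rw [← pow_add]; congr 1 <;> omega
          rw [h1, h2, Nat.add_sub_cancel, qff_succ_left t e, qff_succ_left (n - 1) e,
            qFact_succ, pow_add]
          have h4 : n - 1 - 1 = n - 2 := by omega
          rw [h4]
          have hq0 : q ≠ 0 := by positivity
          have hf : qFact q e ≠ 0 := ne_of_gt (qFact_pos hq e)
          have hi : qInt q (e + 1) ≠ 0 := ne_of_gt (qInt_pos hq (by omega))
          have hn1 : qInt q (n - 1) ≠ 0 := ne_of_gt (qInt_pos hq (by omega))
          have hff : qff q (n - 2) e ≠ 0 := by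
            have heb : e ≤ n - 2 := by simp only [Finset.mem_range] at he; omega
            exact ne_of_gt (qff_pos hq heb)
          field_simp
          rw [← h3]
          ring
        · simp only [Nat.add_sub_cancel]
          rw [qff_eq_zero (show v < e by omega)]
          ring
      rw [Finset.sum_congr rfl this]
      simp
    rw [hcorr]
    -- now apply IH to the inner sum, in the case t ≥ 1
    rcases Nat.eq_zero_or_pos t with ht0 | ht1
    · subst ht0
      simp only [Finset.range_zero, Finset.sum_empty, mul_zero, neg_zero, add_zero,
        Nat.zero_mul, pow_zero, Nat.zero_sub]
      norm_num [qff_zero]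
    · obtain ⟨s, rfl⟩ : ∃ s, t = s + 1 := ⟨t - 1, by omega⟩
      have ihs := ih (n - 1) s (by omega)
      simp only [show n - 1 - 1 = n - 2 from by omega] at ihs
      simp only [Nat.add_sub_cancel]
      rw [ihs]
      -- final algebra
      have hA : qff q (n - 1 - v) (s + 1) = qInt q (n - 1 - v) * qff q (n - 2 - v) s := by
        rw [qff_succ_left]; congr 2 <;> omega
      have hB : qff q (n - 1) (s + 1) = qInt q (n - 1) * qff q (n - 2) s := by
        rw [qff_succ_left]; congr 2 <;> omega
      have hC : qff q (n - 1 - (v + 1)) (s + 1)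
          = qff q (n - 2 - v) s * qInt q (n - 2 - v - s) := by
        rw [show n - 1 - (v + 1) = n - 2 - v from by omega, qff_succ]
      have hD : qInt q (n - 1 - v) = qInt q (s + 1) + q ^ (s + 1) * qInt q (n - 2 - v - s) := by
        rw [← qInt_add]; congr 1 <;> omega
      have hE : q ^ ((s + 1) * (v + 1)) = q ^ ((s + 1) * v) * q ^ (s + 1) := by
        rw [← pow_add]; congr 1 <;> ring
      have hF : q ^ v * q ^ (s * v) = q ^ ((s + 1) * v) := by
        rw [← pow_add]; congr 1 <;> ring
      rw [hA, hB, hC, hD, hE]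
      have hq0 : q ≠ 0 := by positivity
      have hn1 : qInt q (n - 1) ≠ 0 := ne_of_gt (qInt_pos hq (by omega))
      have hB2 : qff q (n - 2) s ≠ 0 := ne_of_gt (qff_pos hq (by omega))
      field_simp
      rw [← hF]
      ring

lemma zpow_d (hq0 : q ≠ 0) (d : ℕ) :
    q ^ ((d * (d + 1) / 2 : ℤ) - 2 * d) = q ^ (d * (d - 1) / 2) / q ^ d := by
  have ha : ((d : ℤ) * ((d : ℤ) + 1)) = ((d * (d + 1) : ℕ) : ℤ) := by push_cast; ring
  have ht : d * (d + 1) / 2 = d * (d - 1) / 2 + d := nat_tri d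
  have h1 : ((d : ℤ) * ((d : ℤ) + 1) / 2 : ℤ) - 2 * d = ((d * (d - 1) / 2 : ℕ) : ℤ) - (d : ℤ) := by
    rw [ha]; omega
  rw [h1, zpow_sub₀ hq0, zpow_natCast, zpow_natCast]


end BtuAux

set_option maxHeartbeats 2000000 in
/-- The `q`-hypergeometric evaluation of the coefficient `b_{t,u}(q)` in the proof of
the two-factor theorem for `GL_n(F_q)`. -/
theorem btu_evaluation (q : ℝ) (hq : 1 < q) (n t u : ℕ) (hn : 1 ≤ n) (htu : t + u < n) :
    ∑ d ∈ Finset.range (min t u + 1),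
      (-1 : ℝ) ^ d * q ^ ((d * (d + 1) / 2 : ℤ) - 2 * d) * qBinom q (n - 1) d *
        ((qFact q t * qFact q (n - d - 1)) / (qFact q (t - d) * qFact q (n - 1))) *
        ((qFact q u * qFact q (n - d - 1)) / (qFact q (u - d) * qFact q (n - 1)))
    = q ^ ((t * u : ℤ) - t - u) *
        ((qFact q (n - t - 1) * qFact q (n - u - 1)) / (qFact q (n - t - u) * qFact q (n - 1))) *
        ((q ^ n - q ^ t - q ^ u + 1) / (q - 1)) := by
  have hq0 : (0:ℝ) < q := lt_trans one_pos hq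
  have hqne : q ≠ 0 := ne_of_gt hq0
  have hq1 : q - 1 ≠ 0 := sub_ne_zero.mpr (ne_of_gt hq)
  have hFne : ∀ m : ℕ, qFact q m ≠ 0 := fun m => ne_of_gt (qFact_pos hq m)
  by_cases hm0 : min t u = 0
  · rw [hm0, Finset.sum_range_one]
    norm_num [qBinom, qFact_zero]
    rw [div_self (hFne (n-1)), div_self (mul_ne_zero (hFne t) (hFne (n-1))),
      div_self (mul_ne_zero (hFne u) (hFne (n-1)))]
    rcases Nat.eq_zero_or_pos t with ht0 | ht1
    · subst ht0
      simp only [Nat.cast_zero, zero_mul, zero_sub, sub_zero, pow_zero, Nat.sub_zero]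
      rw [zpow_neg, zpow_natCast]
      have hsp : qFact q (n - u) = qFact q (n - u - 1) * qInt q (n - u) := by
        rw [show n - u = (n - u - 1) + 1 from by omega, qFact_succ,
          show n - u - 1 + 1 = n - u from by omega]
      have hg : qInt q (n - u) = (q ^ (n - u) - 1) / (q - 1) := by
        rw [eq_div_iff hq1, mul_comm]; exact qInt_geom _
      have hpn : q ^ n = q ^ u * q ^ (n - u) := by rw [← pow_add]; congr 1; omega
      have h6 : q ^ (n - u) - (1:ℝ) ≠ 0 :=
        sub_ne_zero.mpr (ne_of_gt (one_lt_pow₀ hq (by omega)))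
      have hA := hFne (n - 1); have hB := hFne (n - u - 1)
      rw [hsp, hg, hpn]
      field_simp
      ring
    · have hu0 : u = 0 := by omega
      subst hu0
      simp only [Nat.cast_zero, mul_zero, zero_sub, sub_zero, pow_zero, Nat.sub_zero]
      rw [zpow_neg, zpow_natCast]
      have hsp : qFact q (n - t) = qFact q (n - t - 1) * qInt q (n - t) := by
        rw [show n - t = (n - t - 1) + 1 from by omega, qFact_succ,
          show n - t - 1 + 1 = n - t from by omega]
      have hg : qInt q (n - t) = (q ^ (n - t) - 1) / (q - 1) := by
        rw [eq_div_iff hq1, mul_comm]; exact qInt_geom _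
      have hpn : q ^ n = q ^ t * q ^ (n - t) := by rw [← pow_add]; congr 1; omega
      have h6 : q ^ (n - t) - (1:ℝ) ≠ 0 :=
        sub_ne_zero.mpr (ne_of_gt (one_lt_pow₀ hq (by omega)))
      have hA := hFne (n - 1); have hB := hFne (n - t - 1)
      rw [hsp, hg, hpn]
      field_simp
      ring
  · -- main case : t = s+1, u = v+1
    obtain ⟨s, rfl⟩ : ∃ s, t = s + 1 := ⟨t - 1, by omega⟩
    obtain ⟨v, rfl⟩ : ∃ v, u = v + 1 := ⟨u - 1, by omega⟩
    -- termwise: statement term = c d - G d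
    have hterm : ∀ d ∈ Finset.range (min (s+1) (v+1) + 1),
        (-1 : ℝ) ^ d * q ^ ((d * (d + 1) / 2 : ℤ) - 2 * d) * qBinom q (n - 1) d *
          ((qFact q (s+1) * qFact q (n - d - 1)) / (qFact q (s+1 - d) * qFact q (n - 1))) *
          ((qFact q (v+1) * qFact q (n - d - 1)) / (qFact q (v+1 - d) * qFact q (n - 1)))
        = (-1 : ℝ) ^ d * q ^ (d * (d - 1) / 2) * qff q (s+1) d * qff q (v+1) d /
              (qFact q d * qff q (n - 1) d)
          - (q ^ d - 1) * ((-1 : ℝ) ^ d * q ^ (d * (d - 1) / 2) * qff q (s+1) d * qff q (v+1) d) /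
              (q ^ d * (qFact q d * qff q (n - 1) d)) := by
      intro d hd
      rw [Finset.mem_range] at hd
      have hdt : d ≤ s + 1 := by omega
      have hdu : d ≤ v + 1 := by omega
      have hdn : d ≤ n - 1 := by omega
      rw [zpow_d hqne d, qBinom, show n - d - 1 = n - 1 - d from by omega,
        qFact_split (q := q) hdt, qFact_split (q := q) hdu, qFact_split (q := q) hdn]
      have e1 : qFact q (s + 1 - d) ≠ 0 := hFne _
      have e2 : qFact q (v + 1 - d) ≠ 0 := hFne _
      have e3 : qFact q (n - 1 - d) ≠ 0 := hFne _
      have e4 : qFact q d ≠ 0 := hFne _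
      have e5 : qff q (n - 1) d ≠ 0 := ne_of_gt (qff_pos hq hdn)
      have e6 : (q : ℝ) ^ d ≠ 0 := pow_ne_zero _ hqne
      field_simp
      ring
    rw [Finset.sum_congr rfl hterm, Finset.sum_sub_distrib]
    -- first sum : extend range and apply qv
    have hcsum : ∑ d ∈ Finset.range (min (s+1) (v+1) + 1),
        (-1 : ℝ) ^ d * q ^ (d * (d - 1) / 2) * qff q (s+1) d * qff q (v+1) d /
          (qFact q d * qff q (n - 1) d)
        = ∑ d ∈ Finset.range (s + 1 + 1),
        (-1 : ℝ) ^ d * q ^ (d * (d - 1) / 2) * qff q (s+1) d * qff q (v+1) d /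
          (qFact q d * qff q (n - 1) d) := by
      apply Finset.sum_subset (Finset.range_subset_range.mpr (by omega))
      intro d hd hnd
      simp only [Finset.mem_range] at hd hnd
      rw [qff_eq_zero (show v + 1 < d from by omega)]
      ring
    rw [hcsum, qv hq (v+1) n (s+1) htu]
    -- second sum
    have hgsum : ∑ d ∈ Finset.range (min (s+1) (v+1) + 1),
        (q ^ d - 1) * ((-1 : ℝ) ^ d * q ^ (d * (d - 1) / 2) * qff q (s+1) d * qff q (v+1) d) /
          (q ^ d * (qFact q d * qff q (n - 1) d))
        = -((q - 1) * qInt q (s+1) * qInt q (v+1) / (q * qInt q (n - 1)) *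
            (q ^ (s * v) * qff q (n - 2 - v) s / qff q (n - 2) s)) := by
      rw [Finset.sum_range_succ']
      have hG0 : (q ^ 0 - 1) * ((-1 : ℝ) ^ 0 * q ^ (0 * (0 - 1) / 2) * qff q (s+1) 0 * qff q (v+1) 0) /
          (q ^ 0 * (qFact q 0 * qff q (n - 1) 0)) = 0 := by norm_num
      rw [hG0, add_zero]
      have hGe : ∀ e ∈ Finset.range (min (s+1) (v+1)),
          (q ^ (e+1) - 1) * ((-1 : ℝ) ^ (e+1) * q ^ ((e+1) * ((e+1) - 1) / 2) *
              qff q (s+1) (e+1) * qff q (v+1) (e+1)) /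
            (q ^ (e+1) * (qFact q (e+1) * qff q (n - 1) (e+1)))
          = -((q - 1) * qInt q (s+1) * qInt q (v+1) / (q * qInt q (n - 1)) *
              ((-1 : ℝ) ^ e * q ^ (e * (e - 1) / 2) * qff q s e * qff q v e /
                (qFact q e * qff q (n - 2) e))) := by
        intro e he
        simp only [Finset.mem_range] at he
        have h1 : (e + 1) * ((e + 1) - 1) / 2 = e * (e - 1) / 2 + e := by
          simp only [Nat.add_sub_cancel, Nat.mul_comm]; exact nat_tri e
        have h2 : q ^ (e + 1) - 1 = (q - 1) * qInt q (e + 1) := (qInt_geom _).symm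
        rw [h1, h2, qff_succ_left (s+1) e, qff_succ_left (v+1) e, qff_succ_left (n-1) e,
          qFact_succ, show n - 1 - 1 = n - 2 from by omega,
          show s + 1 - 1 = s from by omega, show v + 1 - 1 = v from by omega]
        have e1 : qInt q (e + 1) ≠ 0 := ne_of_gt (qInt_pos hq (by omega))
        have e2 : qFact q e ≠ 0 := hFne _
        have e3 : qInt q (n - 1) ≠ 0 := ne_of_gt (qInt_pos hq (by omega))
        have e4 : qff q (n - 2) e ≠ 0 := ne_of_gt (qff_pos hq (by omega))
        have e5 : (q : ℝ) ^ (e + 1) ≠ 0 := pow_ne_zero _ hqne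
        field_simp
        ring
      rw [Finset.sum_congr rfl hGe]
      rw [Finset.sum_neg_distrib, ← Finset.mul_sum]
      have hext : ∑ e ∈ Finset.range ((s+1) ⊓ (v+1)),
          (-1 : ℝ) ^ e * q ^ (e * (e - 1) / 2) * qff q s e * qff q v e /
            (qFact q e * qff q (n - 2) e)
          = ∑ e ∈ Finset.range (s + 1),
          (-1 : ℝ) ^ e * q ^ (e * (e - 1) / 2) * qff q s e * qff q v e /
            (qFact q e * qff q (n - 2) e) := by
        apply Finset.sum_subset (Finset.range_subset_range.mpr (by omega))
        intro e he hne
        simp only [Finset.mem_range] at he hne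
        rw [qff_eq_zero (show v < e from by omega)]
        ring
      have ihs := qv hq v (n - 1) s (by omega)
      simp only [show n - 1 - 1 = n - 2 from by omega] at ihs
      rw [hext, ihs]
    rw [hgsum]
    -- final algebra
    have hze : ((s + 1 : ℕ) : ℤ) * ((v + 1 : ℕ) : ℤ) - ((s + 1 : ℕ) : ℤ) - ((v + 1 : ℕ) : ℤ)
        = ((s * v : ℕ) : ℤ) - 1 := by push_cast; ring
    rw [hze, zpow_sub₀ hqne, zpow_natCast, zpow_one]
    have hA : qff q (n - 1 - (v + 1)) (s + 1)
        = qff q (n - 2 - v) s * qInt q (n - (s+1) - (v+1)) := by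
      rw [show n - 1 - (v + 1) = n - 2 - v from by omega, qff_succ,
        show n - 2 - v - s = n - (s+1) - (v+1) from by omega]
    have hB : qff q (n - 1) (s + 1) = qInt q (n - 1) * qff q (n - 2) s := by
      rw [qff_succ_left, show n - 1 - 1 = n - 2 from by omega]
    rw [show n - (s+1) - 1 = n - 1 - (s+1) from by omega,
      qFact_split (q := q) (show s + 1 ≤ n - 1 from by omega),
      qFact_split (q := q) (show s ≤ n - (v+1) - 1 from by omega),
      show n - (v+1) - 1 - s = n - (s+1) - (v+1) from by omega,
      show n - (v+1) - 1 = n - 2 - v from by omega]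
    rw [hA, hB]
    -- replace q-integers by rational expressions
    have hIt : qInt q (s + 1) = (q ^ (s+1) - 1) / (q - 1) := by
      rw [eq_div_iff hq1, mul_comm]; exact qInt_geom _
    have hIu : qInt q (v + 1) = (q ^ (v+1) - 1) / (q - 1) := by
      rw [eq_div_iff hq1, mul_comm]; exact qInt_geom _
    have hIZ : qInt q (n - (s+1) - (v+1)) = (q ^ (n - (s+1) - (v+1)) - 1) / (q - 1) := by
      rw [eq_div_iff hq1, mul_comm]; exact qInt_geom _
    have hIn : qInt q (n - 1) = (q ^ (n-1) - 1) / (q - 1) := by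
      rw [eq_div_iff hq1, mul_comm]; exact qInt_geom _
    rw [hIt, hIu, hIZ, hIn]
    have hp3 : q ^ (n - 1) = q ^ s * q ^ (v + 1) * q ^ (n - (s+1) - (v+1)) := by
      rw [← pow_add, ← pow_add]; congr 1; omega
    have hp2 : q ^ n = q ^ (s+1) * q ^ (v+1) * q ^ (n - (s+1) - (v+1)) := by
      rw [← pow_add, ← pow_add]; congr 1; omega
    rw [hp3, hp2]
    have f1 : qff q (n - 2) s ≠ 0 := ne_of_gt (qff_pos hq (by omega))
    have f2 : qFact q (n - 1 - (s + 1)) ≠ 0 := hFne _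
    have f3 : qFact q (n - (s+1) - (v+1)) ≠ 0 := hFne _
    have f4 : q ^ s * q ^ (v + 1) * q ^ (n - (s+1) - (v+1)) - (1:ℝ) ≠ 0 := by
      rw [← hp3]
      exact sub_ne_zero.mpr (ne_of_gt (one_lt_pow₀ hq (by omega)))
    field_simp
    ring
end

section
/- Let q be a prime power and n ≥ 0 an integer. Then, as an identity of polynomials in x (equivalently, for all real x): Σ_{u ∈ GL_n(𝔽_q)} x^{dim ker(u−1)} = |GL_n(𝔽_q)| · Σ_{t=0}^{n} (x;q^{−1})_t/(q;q)_t. -/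
open Finset Module MulAction

/-- The `q`-Pochhammer symbol `(a; q)_m = ∏_{i=0}^{m-1} (1 - a q^i)` over `ℝ`. -/
noncomputable def qPoch (a q : ℝ) (m : ℕ) : ℝ := ∏ i ∈ Finset.range m, (1 - a * q ^ i)

/-- The dimension of the fixed space `ker(u - 1)` of `u ∈ GL_n(F)`. -/
noncomputable def fixedDim {F : Type} [Field F] {n : ℕ} (u : GL (Fin n) F) : ℕ :=
  Module.finrank F (LinearMap.ker (Matrix.toLin' ((u : Matrix (Fin n) (Fin n) F) - 1)))

section QId
variable {q : ℝ} (hq : 1 < q)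
include hq

lemma qPoch_q_ne_zero (t : ℕ) : qPoch q q t ≠ 0 := by
  unfold qPoch
  refine Finset.prod_ne_zero_iff.2 fun i _ => ?_
  have : 1 < q * q ^ i := by
    calc (1:ℝ) < q := hq
    _ ≤ q * q ^ i := le_mul_of_one_le_right (by linarith) (one_le_pow₀ (le_of_lt hq))
  linarith

lemma pascalQ (y : ℝ) (t : ℕ) :
    ∏ i ∈ range (t+1), (q * y - q ^ i)
      = q ^ (t+1) * ∏ i ∈ range (t+1), (y - q ^ i)
        + q ^ t * (q ^ (t+1) - 1) * ∏ i ∈ range t, (y - q ^ i) := by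
  rw [Finset.prod_range_succ' (fun i => q * y - q ^ i), Finset.prod_range_succ]
  have h1 : ∀ i, q * y - q ^ (i+1) = q * (y - q ^ i) := by intro i; ring
  simp only [h1, Finset.prod_mul_distrib, Finset.prod_const, Finset.card_range, pow_zero]
  ring

lemma xmulR (x : ℝ) (t : ℕ) :
    x * (qPoch x q⁻¹ t / qPoch q q t)
      = q ^ t * (qPoch x q⁻¹ t / qPoch q q t)
        + q ^ t * (q ^ (t+1) - 1) * (qPoch x q⁻¹ (t+1) / qPoch q q (t+1)) := by
  have hq0 : q ≠ 0 := by linarith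
  have hPq : qPoch q q t ≠ 0 := qPoch_q_ne_zero hq t
  have hPq1 : (1 : ℝ) - q * q ^ t ≠ 0 := by
    have : 1 < q * q ^ t := by
      calc (1:ℝ) < q := hq
      _ ≤ q * q ^ t := le_mul_of_one_le_right (by linarith) (one_le_pow₀ (le_of_lt hq))
    linarith
  have e1 : qPoch x q⁻¹ (t+1) = qPoch x q⁻¹ t * (1 - x * q⁻¹ ^ t) := Finset.prod_range_succ _ _
  have e2 : qPoch q q (t+1) = qPoch q q t * (1 - q * q ^ t) := Finset.prod_range_succ _ _
  rw [e1, e2]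
  have hqt : q ^ t ≠ 0 := pow_ne_zero _ hq0
  field_simp
  have hinv : q ^ t * q⁻¹ ^ t = 1 := by rw [← mul_pow, mul_inv_cancel₀ hq0, one_pow]
  linear_combination (x * q * q ^ t * qPoch x (1 / q) t - x * qPoch x (1 / q) t) * hinv

lemma keyA (x : ℝ) (d : ℕ) :
    x ^ d = ∑ t ∈ range (d+1),
      (∏ i ∈ range t, (q ^ d - q ^ i)) * (qPoch x q⁻¹ t / qPoch q q t) := by
  induction d with
  | zero => simp [qPoch]
  | succ d ih =>
    have hC0 : (∏ i ∈ range (d+1), (q ^ d - q ^ i)) = 0 :=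
      Finset.prod_eq_zero (Finset.self_mem_range_succ d) (by ring)
    have hCsucc : ∀ t : ℕ, (∏ i ∈ range (t+1), (q ^ (d+1) - q ^ i))
        = q ^ (t+1) * ∏ i ∈ range (t+1), (q ^ d - q ^ i)
          + q ^ t * (q ^ (t+1) - 1) * ∏ i ∈ range t, (q ^ d - q ^ i) := by
      intro t
      have := pascalQ hq (q ^ d) t
      rwa [← pow_succ' q d] at this
    have hR0 : qPoch x q⁻¹ 0 / qPoch q q 0 = 1 := by simp [qPoch]
    calc x ^ (d+1) = x * x ^ d := by ring
    _ = ∑ t ∈ range (d+1),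
          (∏ i ∈ range t, (q ^ d - q ^ i)) * (x * (qPoch x q⁻¹ t / qPoch q q t)) := by
        rw [ih, Finset.mul_sum]; exact Finset.sum_congr rfl fun t _ => by ring
    _ = (∑ t ∈ range (d+1),
          q ^ t * (∏ i ∈ range t, (q ^ d - q ^ i)) * (qPoch x q⁻¹ t / qPoch q q t))
        + ∑ t ∈ range (d+1),
          q ^ t * (q ^ (t+1) - 1) * (∏ i ∈ range t, (q ^ d - q ^ i))
            * (qPoch x q⁻¹ (t+1) / qPoch q q (t+1)) := by
        rw [← Finset.sum_add_distrib]
        refine Finset.sum_congr rfl fun t _ => ?_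
        rw [xmulR hq x t]; ring
    _ = ∑ t ∈ range (d+1+1),
          (∏ i ∈ range t, (q ^ (d+1) - q ^ i)) * (qPoch x q⁻¹ t / qPoch q q t) := by
        rw [Finset.sum_range_succ' (fun t => (∏ i ∈ range t, (q ^ (d+1) - q ^ i))
            * (qPoch x q⁻¹ t / qPoch q q t))]
        rw [Finset.sum_range_succ' (fun t => q ^ t * (∏ i ∈ range t, (q ^ d - q ^ i))
            * (qPoch x q⁻¹ t / qPoch q q t))]
        simp only [hCsucc, hR0, Finset.range_zero, Finset.prod_empty, pow_zero, one_mul, mul_one]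
        rw [add_right_comm, add_left_inj]
        have expand : (∑ t ∈ range (d+1),
              (q ^ (t+1) * ∏ i ∈ range (t+1), (q ^ d - q ^ i)
                + q ^ t * (q ^ (t+1) - 1) * ∏ i ∈ range t, (q ^ d - q ^ i))
                * (qPoch x q⁻¹ (t+1) / qPoch q q (t+1)))
            = (∑ t ∈ range (d+1), (q ^ (t+1) * ∏ i ∈ range (t+1), (q ^ d - q ^ i))
                * (qPoch x q⁻¹ (t+1) / qPoch q q (t+1)))
              + ∑ t ∈ range (d+1), (q ^ t * (q ^ (t+1) - 1) * ∏ i ∈ range t, (q ^ d - q ^ i))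
                * (qPoch x q⁻¹ (t+1) / qPoch q q (t+1)) := by
          rw [← Finset.sum_add_distrib]
          exact Finset.sum_congr rfl fun t _ => by ring
        rw [expand]
        congr 1
        rw [Finset.sum_range_succ (fun t => (q ^ (t+1) * ∏ i ∈ range (t+1), (q ^ d - q ^ i))
            * (qPoch x q⁻¹ (t+1) / qPoch q q (t+1)))]
        simp [hC0]

end QId

lemma keyA' {q : ℝ} (hq : 1 < q) (x : ℝ) {d n : ℕ} (hdn : d ≤ n) :
    x ^ d = ∑ t ∈ Finset.range (n+1),
      (∏ i ∈ Finset.range t, (q ^ d - q ^ i)) * (qPoch x q⁻¹ t / qPoch q q t) := by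
  rw [keyA hq x d]
  refine Finset.sum_subset (Finset.range_subset_range.2 (by omega)) fun t htm htnm => ?_
  have hmem : d ∈ Finset.range t := by
    simp only [Finset.mem_range] at htm htnm ⊢; omega
  rw [Finset.prod_eq_zero hmem (by ring), zero_mul]

section Counting
variable {F : Type} [Field F] [Fintype F] [DecidableEq F] {n : ℕ}

/-- fixed space -/
noncomputable def fixSpace (u : GL (Fin n) F) : Submodule F (Fin n → F) :=
  LinearMap.ker (Matrix.toLin' ((u : Matrix (Fin n) (Fin n) F) - 1))

lemma mem_fixSpace {u : GL (Fin n) F} {v : Fin n → F} :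
    v ∈ fixSpace u ↔ (u : Matrix (Fin n) (Fin n) F).mulVec v = v := by
  simp [fixSpace, Matrix.toLin'_apply, Matrix.sub_mulVec, Matrix.one_mulVec, sub_eq_zero]

lemma fixedDim_eq (u : GL (Fin n) F) : fixedDim u = finrank F (fixSpace u) := rfl

/-- the type of linearly independent t-tuples -/
abbrev IndTuples (F : Type) [Field F] (n t : ℕ) : Type :=
  {s : Fin t → (Fin n → F) // LinearIndependent F s}

instance indAction (t : ℕ) : MulAction (GL (Fin n) F) (IndTuples F n t) where
  smul g s := ⟨fun i => (g : Matrix (Fin n) (Fin n) F).mulVec (s.1 i), by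
    have : (fun i => (g : Matrix (Fin n) (Fin n) F).mulVec (s.1 i))
        = ⇑(Matrix.GeneralLinearGroup.toLin g).toLinearEquiv ∘ s.1 := by
      funext i
      simp [Matrix.GeneralLinearGroup.toLin_apply]
    rw [this]
    exact s.2.map' _ (LinearEquiv.ker _)⟩
  one_smul s := by
    apply Subtype.ext; funext i
    show ((1 : GL (Fin n) F) : Matrix (Fin n) (Fin n) F).mulVec (s.1 i) = s.1 i
    simp
  mul_smul g h s := by
    apply Subtype.ext; funext i
    show ((g * h : GL (Fin n) F) : Matrix (Fin n) (Fin n) F).mulVec (s.1 i)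
        = (g : Matrix (Fin n) (Fin n) F).mulVec ((h : Matrix (Fin n) (Fin n) F).mulVec (s.1 i))
    rw [Matrix.mulVec_mulVec]
    rfl

lemma smul_tuple_def (g : GL (Fin n) F) (s : IndTuples F n t) (i : Fin t) :
    (g • s).1 i = (g : Matrix (Fin n) (Fin n) F).mulVec (s.1 i) := rfl

end Counting

section Counting2
variable {F : Type} [Field F] [Fintype F] [DecidableEq F] {n t : ℕ}

noncomputable def fixedByEquiv (u : GL (Fin n) F) (t : ℕ) :
    (MulAction.fixedBy (IndTuples F n t) u)
      ≃ {s : Fin t → (fixSpace u) // LinearIndependent F s} where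
  toFun s := ⟨fun i => ⟨s.1.1 i, mem_fixSpace.2 (congrArg (fun z => z.1 i) s.2)⟩, by
    have h := s.1.2
    exact h.of_comp (fixSpace u).subtype⟩
  invFun s := ⟨⟨fun i => (s.1 i : Fin n → F),
      s.2.map' (fixSpace u).subtype (Submodule.ker_subtype _)⟩, by
    apply Subtype.ext; funext i
    exact mem_fixSpace.1 (s.1 i).2⟩
  left_inv s := by apply Subtype.ext; apply Subtype.ext; rfl
  right_inv s := by apply Subtype.ext; funext i; apply Subtype.ext; rfl

lemma card_fixedBy (u : GL (Fin n) F) (t : ℕ) :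
    (Nat.card (MulAction.fixedBy (IndTuples F n t) u) : ℝ)
      = ∏ i ∈ range t,
          ((Fintype.card F : ℝ) ^ (fixedDim u) - (Fintype.card F : ℝ) ^ i) := by
  rw [Nat.card_congr (fixedByEquiv u t)]
  have hd : finrank F (fixSpace u) = fixedDim u := rfl
  by_cases h : t ≤ fixedDim u
  · rw [card_linearIndependent (by rw [hd]; exact h)]
    rw [Fin.prod_univ_eq_prod_range (fun i =>
      Fintype.card F ^ finrank F (fixSpace u) - Fintype.card F ^ i)]
    rw [Nat.cast_prod]
    refine Finset.prod_congr rfl fun i hi => ?_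
    have hi' : i < t := Finset.mem_range.1 hi
    have hle : Fintype.card F ^ i ≤ Fintype.card F ^ finrank F (fixSpace u) := by
      refine Nat.pow_le_pow_right Fintype.card_pos ?_
      rw [hd]; omega
    rw [Nat.cast_sub hle, Nat.cast_pow, Nat.cast_pow, hd]
  · have : IsEmpty {s : Fin t → (fixSpace u) // LinearIndependent F s} := by
      constructor
      intro s
      exact h (by simpa [hd] using s.2.fintype_card_le_finrank)
    rw [Nat.card_of_isEmpty, Nat.cast_zero]
    symm
    refine Finset.prod_eq_zero (Finset.mem_range.2 (by omega :
      fixedDim u < t)) (by ring)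

end Counting2

section Counting3
variable {F : Type} [Field F] [Fintype F] [DecidableEq F] {n t : ℕ}

noncomputable def glOfLinearEquiv (e : (Fin n → F) ≃ₗ[F] (Fin n → F)) : GL (Fin n) F :=
  Matrix.GeneralLinearGroup.toLin.symm
    ((LinearMap.GeneralLinearGroup.generalLinearEquiv F (Fin n → F)).symm e)

lemma glOfLinearEquiv_mulVec (e : (Fin n → F) ≃ₗ[F] (Fin n → F)) (v : Fin n → F) :
    ((glOfLinearEquiv e : GL (Fin n) F) : Matrix (Fin n) (Fin n) F).mulVec v = e v := by
  have h2 : Matrix.GeneralLinearGroup.toLin (glOfLinearEquiv e)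
      = (LinearMap.GeneralLinearGroup.generalLinearEquiv F (Fin n → F)).symm e := by
    simp [glOfLinearEquiv]
  have h5 : (((LinearMap.GeneralLinearGroup.generalLinearEquiv F (Fin n → F)).symm e :
      (Fin n → F) →ₗ[F] (Fin n → F))) = (e : (Fin n → F) →ₗ[F] (Fin n → F)) := rfl
  have h1 := Matrix.GeneralLinearGroup.coe_toLin (A := glOfLinearEquiv e)
  rw [h2, h5] at h1
  have := congrFun (congrArg
    (fun (f : (Fin n → F) →ₗ[F] (Fin n → F)) => (f : (Fin n → F) → (Fin n → F))) h1) v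
  simpa using this.symm

lemma indTuples_pretransitive (ht : t ≤ n) :
    MulAction.IsPretransitive (GL (Fin n) F) (IndTuples F n t) := by
  constructor
  rintro ⟨s₁, h₁⟩ ⟨s₂, h₂⟩
  obtain ⟨W₁', hc₁⟩ := (Submodule.span F (Set.range s₁)).exists_isCompl
  obtain ⟨W₂', hc₂⟩ := (Submodule.span F (Set.range s₂)).exists_isCompl
  have hr1 : finrank F (Submodule.span F (Set.range s₁)) = t := by
    rw [finrank_span_eq_card h₁, Fintype.card_fin]
  have hr2 : finrank F (Submodule.span F (Set.range s₂)) = t := by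
    rw [finrank_span_eq_card h₂, Fintype.card_fin]
  have e1 := Submodule.finrank_add_eq_of_isCompl hc₁
  have e2 := Submodule.finrank_add_eq_of_isCompl hc₂
  have hr : finrank F W₁' = finrank F W₂' := by omega
  let b₁ := Basis.span h₁
  let b₂ := Basis.span h₂
  let e : (Fin n → F) ≃ₗ[F] (Fin n → F) :=
    (Submodule.prodEquivOfIsCompl _ _ hc₁).symm.trans
      (((b₁.equiv b₂ (Equiv.refl _)).prodCongr (LinearEquiv.ofFinrankEq _ _ hr)).trans
        (Submodule.prodEquivOfIsCompl _ _ hc₂))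
  refine ⟨glOfLinearEquiv e, ?_⟩
  apply Subtype.ext; funext i
  rw [smul_tuple_def, glOfLinearEquiv_mulVec]
  have hmem : s₁ i ∈ Submodule.span F (Set.range s₁) :=
    Submodule.subset_span (Set.mem_range_self i)
  have h0 : (Submodule.prodEquivOfIsCompl _ _ hc₁).symm (s₁ i)
      = (⟨s₁ i, hmem⟩, 0) :=
    Submodule.prodEquivOfIsCompl_symm_apply_left (p := Submodule.span F (Set.range s₁)) (q := W₁') hc₁ ⟨s₁ i, hmem⟩
  have hb1 : (⟨s₁ i, hmem⟩ : Submodule.span F (Set.range s₁)) = b₁ i := by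
    apply Subtype.ext; simp [b₁, Basis.span_apply]
  show ((Submodule.prodEquivOfIsCompl _ _ hc₁).symm.trans
      (((b₁.equiv b₂ (Equiv.refl _)).prodCongr (LinearEquiv.ofFinrankEq _ _ hr)).trans
        (Submodule.prodEquivOfIsCompl _ _ hc₂))) (s₁ i) = s₂ i
  rw [LinearEquiv.trans_apply, h0, LinearEquiv.trans_apply, LinearEquiv.prodCongr_apply, hb1,
    Basis.equiv_apply, LinearEquiv.map_zero, Submodule.coe_prodEquivOfIsCompl']
  simp [b₂, Basis.span_apply]

lemma indTuples_nonempty (ht : t ≤ n) : Nonempty (IndTuples F n t) := by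
  refine ⟨⟨fun i => (Pi.single (Fin.castLE ht i) 1 : Fin n → F), ?_⟩⟩
  have h2 := (Pi.basisFun F (Fin n)).linearIndependent.comp
    (Fin.castLE ht) (Fin.castLE_injective ht)
  have he : (fun i : Fin t => (Pi.single (Fin.castLE ht i) 1 : Fin n → F))
      = (Pi.basisFun F (Fin n)) ∘ (Fin.castLE ht) := by
    funext i; simp [Pi.basisFun_apply]
  rw [he]
  exact h2

lemma sum_prod_fixed (t : ℕ) (ht : t ≤ n) :
    ∑ u : GL (Fin n) F, ∏ i ∈ range t,
        ((Fintype.card F : ℝ) ^ fixedDim u - (Fintype.card F : ℝ) ^ i)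
      = (Nat.card (GL (Fin n) F) : ℝ) := by
  classical
  haveI : Fintype (IndTuples F n t) := Fintype.ofFinite _
  haveI : ∀ u : GL (Fin n) F, Fintype (MulAction.fixedBy (IndTuples F n t) u) :=
    fun u => Fintype.ofFinite _
  haveI : Fintype (Quotient (MulAction.orbitRel (GL (Fin n) F) (IndTuples F n t))) :=
    Fintype.ofFinite _
  have hB := MulAction.sum_card_fixedBy_eq_card_orbits_mul_card_group
    (GL (Fin n) F) (IndTuples F n t)
  haveI hpt := indTuples_pretransitive (F := F) ht
  haveI hne : Nonempty (IndTuples F n t) := indTuples_nonempty ht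
  have horb : Fintype.card
      (Quotient (MulAction.orbitRel (GL (Fin n) F) (IndTuples F n t))) = 1 := by
    haveI : Subsingleton (Quotient (MulAction.orbitRel (GL (Fin n) F) (IndTuples F n t))) :=
      (MulAction.pretransitive_iff_subsingleton_quotient _ _).1 hpt
    haveI : Nonempty (Quotient (MulAction.orbitRel (GL (Fin n) F) (IndTuples F n t))) :=
      Nonempty.map Quotient.mk'' hne
    exact Fintype.card_eq_one_iff.2
      ⟨Classical.arbitrary _, fun y => Subsingleton.elim _ _⟩
  rw [horb, one_mul] at hB
  calc ∑ u : GL (Fin n) F, ∏ i ∈ range t,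
        ((Fintype.card F : ℝ) ^ fixedDim u - (Fintype.card F : ℝ) ^ i)
      = ∑ u : GL (Fin n) F,
          (Nat.card (MulAction.fixedBy (IndTuples F n t) u) : ℝ) :=
        Finset.sum_congr rfl fun u _ => (card_fixedBy u t).symm
    _ = ((∑ u : GL (Fin n) F,
          Fintype.card (MulAction.fixedBy (IndTuples F n t) u) : ℕ) : ℝ) := by
        push_cast [Nat.card_eq_fintype_card]; rfl
    _ = (Nat.card (GL (Fin n) F) : ℝ) := by
        rw [hB, Nat.card_eq_fintype_card]

end Counting3

set_option maxHeartbeats 1000000 in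
/-- The Rudvalis–Shinoda generating function for `GL_n(F_q)` by fixed space dimension. -/
theorem glnq_fixed_space_genfun
    (F : Type) [Field F] [Fintype F] [DecidableEq F] (q : ℝ) (hq : q = Fintype.card F)
    (n : ℕ) (x : ℝ) :
    ∑ u : GL (Fin n) F, x ^ fixedDim u
    = (Nat.card (GL (Fin n) F) : ℝ) *
        ∑ t ∈ Finset.range (n + 1), qPoch x q⁻¹ t / qPoch q q t := by
  subst hq
  have hq1 : (1:ℝ) < (Fintype.card F : ℝ) := by exact_mod_cast Fintype.one_lt_card
  have hd : ∀ u : GL (Fin n) F, fixedDim u ≤ n := fun u => by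
    rw [fixedDim_eq]
    have h := Submodule.finrank_le (fixSpace u)
    simpa [Module.finrank_fintype_fun_eq_card] using h
  calc ∑ u : GL (Fin n) F, x ^ fixedDim u
      = ∑ u : GL (Fin n) F, ∑ t ∈ Finset.range (n+1),
          (∏ i ∈ Finset.range t,
            ((Fintype.card F : ℝ) ^ fixedDim u - (Fintype.card F : ℝ) ^ i))
            * (qPoch x ((Fintype.card F : ℝ))⁻¹ t
                / qPoch (Fintype.card F : ℝ) (Fintype.card F : ℝ) t) :=
        Finset.sum_congr rfl fun u _ => keyA' hq1 x (hd u)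
    _ = ∑ t ∈ Finset.range (n+1), ∑ u : GL (Fin n) F,
          (∏ i ∈ Finset.range t,
            ((Fintype.card F : ℝ) ^ fixedDim u - (Fintype.card F : ℝ) ^ i))
            * (qPoch x ((Fintype.card F : ℝ))⁻¹ t
                / qPoch (Fintype.card F : ℝ) (Fintype.card F : ℝ) t) := Finset.sum_comm
    _ = ∑ t ∈ Finset.range (n+1), (Nat.card (GL (Fin n) F) : ℝ)
          * (qPoch x ((Fintype.card F : ℝ))⁻¹ t
              / qPoch (Fintype.card F : ℝ) (Fintype.card F : ℝ) t) := by
        refine Finset.sum_congr rfl fun t htmem => ?_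
        rw [← Finset.sum_mul, sum_prod_fixed t (Nat.lt_succ_iff.1 (Finset.mem_range.1 htmem))]
    _ = _ := by rw [← Finset.mul_sum]
end

section
/- Let q > 1 be real and let b, c be real numbers. Then there exist constants C₁, C₂ > 0, depending only on q and b − c, such that for every real a and every integer g ≥ 0 there is an N with: for all integers n ≥ N, C₁ · R(n) ≤ Σ_{r,s ≥ 1, r+s = n−g} q^{2rs + an + br + cs} ≤ C₂ · R(n), where R(n) = q^{(b−c)²/8 + g(g−b−c)/2 + n²/2 + (2a+b+c−2g)n/2}. -/
set_option maxHeartbeats 1000000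

private lemma geom_aux {t : ℝ} (h0 : 0 ≤ t) (h1 : t < 1) (N : ℕ) :
    ∑ i ∈ Finset.range N, t ^ i ≤ 1 / (1 - t) := by
  have h1t : 0 < 1 - t := by linarith
  rw [geom_sum_eq h1.ne N]
  have heq : (t ^ N - 1) / (t - 1) = (1 - t ^ N) / (1 - t) := by
    rw [← neg_sub 1 t, ← neg_sub 1 (t ^ N), neg_div_neg_eq]
  rw [heq]
  have hN : (0:ℝ) ≤ t ^ N := pow_nonneg h0 N
  gcongr
  linarith

private lemma nat_pow_aux {q : ℝ} (hq : 1 < q) (j : ℕ) :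
    (q ^ (-2 : ℝ)) ^ j = q ^ (-2 * (j : ℝ)) := by
  rw [← Real.rpow_natCast (q ^ (-2 : ℝ)) j, ← Real.rpow_mul (by linarith)]

/-- Proposition 5.4: the Θ-estimate, as `n → ∞`, for
`Σ_{r,s ≥ 1, r+s = n−g} q^{2rs + an + br + cs}`, with implicit constants depending only
on `q` and on the difference `b − c`. -/
theorem theta_estimate_for_genus_sums
    (q : ℝ) (hq : 1 < q) (δ : ℝ) :
    ∃ C₁ C₂ : ℝ, 0 < C₁ ∧ 0 < C₂ ∧
      ∀ b c : ℝ, b - c = δ →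
        ∀ a : ℝ, ∀ g : ℕ, ∃ N : ℕ, ∀ n : ℕ, N ≤ n →
          C₁ * q ^ ((b - c) ^ 2 / 8 + (g : ℝ) * ((g : ℝ) - b - c) / 2 + (n : ℝ) ^ 2 / 2 +
                (2 * a + b + c - 2 * (g : ℝ)) * (n : ℝ) / 2)
              ≤ (∑ r ∈ Finset.Ico 1 (n - g),
                  q ^ (2 * (r : ℝ) * ((n : ℝ) - (g : ℝ) - (r : ℝ)) + a * (n : ℝ) +
                    b * (r : ℝ) + c * ((n : ℝ) - (g : ℝ) - (r : ℝ)))) ∧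
            (∑ r ∈ Finset.Ico 1 (n - g),
                q ^ (2 * (r : ℝ) * ((n : ℝ) - (g : ℝ) - (r : ℝ)) + a * (n : ℝ) +
                  b * (r : ℝ) + c * ((n : ℝ) - (g : ℝ) - (r : ℝ))))
              ≤ C₂ * q ^ ((b - c) ^ 2 / 8 + (g : ℝ) * ((g : ℝ) - b - c) / 2 + (n : ℝ) ^ 2 / 2 +
                  (2 * a + b + c - 2 * (g : ℝ)) * (n : ℝ) / 2) := by
  have hq0 : 0 < q := by linarith
  set t : ℝ := q ^ (-2 : ℝ) with ht_def
  have ht0 : 0 < t := Real.rpow_pos_of_pos hq0 _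
  have ht1 : t < 1 := Real.rpow_lt_one_of_one_lt_of_neg hq (by norm_num)
  have h1t : 0 < 1 - t := by linarith
  refine ⟨t, 2 / (1 - t), ht0, by positivity, ?_⟩
  intro b c hbc a g
  refine ⟨g + (⌈|δ|⌉₊ + 4), ?_⟩
  intro n hn
  have hb : b = c + δ := by linarith
  have hgn : g ≤ n := le_trans (Nat.le_add_right _ _) hn
  set m : ℕ := n - g with hm_def
  have hm4 : ⌈|δ|⌉₊ + 4 ≤ m := by omega
  have hmn : (m : ℝ) = (n : ℝ) - (g : ℝ) := by
    rw [hm_def, Nat.cast_sub hgn]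
  have hδm : |δ| + 4 ≤ (m : ℝ) := by
    have h1 : ((⌈|δ|⌉₊ : ℝ) + 4) ≤ (m : ℝ) := by exact_mod_cast hm4
    have h2 : |δ| ≤ (⌈|δ|⌉₊ : ℝ) := Nat.le_ceil _
    linarith
  have habs1 : δ ≤ |δ| := le_abs_self δ
  have habs2 : -|δ| ≤ δ := neg_abs_le δ
  set ρ : ℝ := (m : ℝ) / 2 + δ / 4 with hρ_def
  have hρ2 : 2 ≤ ρ := by rw [hρ_def]; linarith
  have hρm : ρ + 1 < (m : ℝ) := by rw [hρ_def]; linarith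
  set k : ℕ := ⌊ρ⌋₊ with hk_def
  have hk_le : (k : ℝ) ≤ ρ := Nat.floor_le (by linarith)
  have hk_lt : ρ < (k : ℝ) + 1 := Nat.lt_floor_add_one ρ
  have hk1 : 1 ≤ k := by
    rw [hk_def]; exact Nat.le_floor (by push_cast; linarith)
  have hkm : k + 1 < m := by
    have : ((k : ℝ) + 1) < (m : ℝ) := by linarith
    exact_mod_cast this
  -- key exponent identity
  have hkey : ∀ r : ℕ,
      2 * (r : ℝ) * ((n : ℝ) - (g : ℝ) - (r : ℝ)) + a * (n : ℝ) + b * (r : ℝ) +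
        c * ((n : ℝ) - (g : ℝ) - (r : ℝ)) =
      ((b - c) ^ 2 / 8 + (g : ℝ) * ((g : ℝ) - b - c) / 2 + (n : ℝ) ^ 2 / 2 +
        (2 * a + b + c - 2 * (g : ℝ)) * (n : ℝ) / 2) + (-2 * ((r : ℝ) - ρ) ^ 2) := by
    intro r
    have hn' : (n : ℝ) = (m : ℝ) + (g : ℝ) := by linarith
    rw [hb, hn', hρ_def]; ring
  set E : ℝ := (b - c) ^ 2 / 8 + (g : ℝ) * ((g : ℝ) - b - c) / 2 + (n : ℝ) ^ 2 / 2 +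
      (2 * a + b + c - 2 * (g : ℝ)) * (n : ℝ) / 2 with hE_def
  have hS : (∑ r ∈ Finset.Ico 1 m,
        q ^ (2 * (r : ℝ) * ((n : ℝ) - (g : ℝ) - (r : ℝ)) + a * (n : ℝ) +
          b * (r : ℝ) + c * ((n : ℝ) - (g : ℝ) - (r : ℝ)))) =
      q ^ E * ∑ r ∈ Finset.Ico 1 m, q ^ (-2 * ((r : ℝ) - ρ) ^ 2) := by
    rw [Finset.mul_sum]
    refine Finset.sum_congr rfl fun r _ => ?_
    rw [hkey r, Real.rpow_add hq0]
  have hqE : 0 < q ^ E := Real.rpow_pos_of_pos hq0 _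
  -- upper bound on the gaussian sum
  have hT_upper : (∑ r ∈ Finset.Ico 1 m, q ^ (-2 * ((r : ℝ) - ρ) ^ 2)) ≤ 2 / (1 - t) := by
    rw [← Finset.sum_Ico_consecutive (fun r : ℕ => q ^ (-2 * ((r : ℝ) - ρ) ^ 2))
      (Nat.one_le_iff_ne_zero.mpr (Nat.succ_ne_zero k)) (le_of_lt hkm)]
    have hA : (∑ r ∈ Finset.Ico 1 (k + 1), q ^ (-2 * ((r : ℝ) - ρ) ^ 2)) ≤ 1 / (1 - t) := by
      calc (∑ r ∈ Finset.Ico 1 (k + 1), q ^ (-2 * ((r : ℝ) - ρ) ^ 2))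
          ≤ ∑ r ∈ Finset.Ico 1 (k + 1), t ^ (k - r) := by
            refine Finset.sum_le_sum fun r hr => ?_
            obtain ⟨hr1, hr2⟩ := Finset.mem_Ico.mp hr
            have hrk : r ≤ k := Nat.lt_succ_iff.mp hr2
            rw [ht_def, nat_pow_aux hq]
            rw [Real.rpow_le_rpow_left_iff hq]
            have hcast : ((k - r : ℕ) : ℝ) = (k : ℝ) - (r : ℝ) := by
              rw [Nat.cast_sub hrk]
            have hsq : ((k - r : ℕ) : ℝ) ≤ ((k - r : ℕ) : ℝ) ^ 2 := by
              have := Nat.le_self_pow (two_ne_zero) (k - r)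
              exact_mod_cast this
            have h0 : (0 : ℝ) ≤ (k : ℝ) - (r : ℝ) := by
              rw [← hcast]; positivity
            have hsq2 : ((k : ℝ) - (r : ℝ)) ^ 2 ≤ ((r : ℝ) - ρ) ^ 2 := by
              have h1 : ((k : ℝ) - (r : ℝ)) ^ 2 ≤ (ρ - (r : ℝ)) ^ 2 :=
                pow_le_pow_left₀ h0 (by linarith) 2
              have h2 : (ρ - (r : ℝ)) ^ 2 = ((r : ℝ) - ρ) ^ 2 := by ring
              linarith
            rw [hcast] at hsq
            rw [hcast]
            linarith
        _ = ∑ i ∈ Finset.range k, t ^ (k - 1 - i) := by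
            rw [Finset.sum_Ico_eq_sum_range]
            refine Finset.sum_congr (by congr 1) fun i _ => ?_
            congr 1; omega
        _ = ∑ i ∈ Finset.range k, t ^ i := Finset.sum_range_reflect (fun i => t ^ i) k
        _ ≤ 1 / (1 - t) := geom_aux ht0.le ht1 k
    have hB : (∑ r ∈ Finset.Ico (k + 1) m, q ^ (-2 * ((r : ℝ) - ρ) ^ 2)) ≤ 1 / (1 - t) := by
      calc (∑ r ∈ Finset.Ico (k + 1) m, q ^ (-2 * ((r : ℝ) - ρ) ^ 2))
          ≤ ∑ r ∈ Finset.Ico (k + 1) m, t ^ (r - (k + 1)) := by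
            refine Finset.sum_le_sum fun r hr => ?_
            obtain ⟨hr1, hr2⟩ := Finset.mem_Ico.mp hr
            rw [ht_def, nat_pow_aux hq]
            rw [Real.rpow_le_rpow_left_iff hq]
            have hcast : ((r - (k + 1) : ℕ) : ℝ) = (r : ℝ) - ((k : ℝ) + 1) := by
              rw [Nat.cast_sub hr1]; push_cast; ring
            have hsq : ((r - (k + 1) : ℕ) : ℝ) ≤ ((r - (k + 1) : ℕ) : ℝ) ^ 2 := by
              have := Nat.le_self_pow (two_ne_zero) (r - (k + 1))
              exact_mod_cast this
            have h0 : (0 : ℝ) ≤ (r : ℝ) - ((k : ℝ) + 1) := by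
              rw [← hcast]; positivity
            have hsq2 : ((r : ℝ) - ((k : ℝ) + 1)) ^ 2 ≤ ((r : ℝ) - ρ) ^ 2 := by
              exact pow_le_pow_left₀ h0 (by linarith) 2
            rw [hcast] at hsq
            rw [hcast]
            linarith
        _ = ∑ i ∈ Finset.range (m - (k + 1)), t ^ i := by
            rw [Finset.sum_Ico_eq_sum_range]
            refine Finset.sum_congr rfl fun i _ => ?_
            congr 1; omega
        _ ≤ 1 / (1 - t) := geom_aux ht0.le ht1 _
    have : 1 / (1 - t) + 1 / (1 - t) = 2 / (1 - t) := by ring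
    linarith
  -- lower bound on the gaussian sum
  have hT_lower : t ≤ ∑ r ∈ Finset.Ico 1 m, q ^ (-2 * ((r : ℝ) - ρ) ^ 2) := by
    have hkmem : k ∈ Finset.Ico 1 m := Finset.mem_Ico.mpr ⟨hk1, by omega⟩
    have hterm : t ≤ q ^ (-2 * ((k : ℝ) - ρ) ^ 2) := by
      rw [ht_def, Real.rpow_le_rpow_left_iff hq]
      have h1 : ((k : ℝ) - ρ) ^ 2 ≤ 1 := by nlinarith [hk_le, hk_lt]
      linarith
    calc t ≤ q ^ (-2 * ((k : ℝ) - ρ) ^ 2) := hterm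
      _ ≤ ∑ r ∈ Finset.Ico 1 m, q ^ (-2 * ((r : ℝ) - ρ) ^ 2) :=
          Finset.single_le_sum (f := fun r : ℕ => q ^ (-2 * ((r : ℝ) - ρ) ^ 2))
            (fun i _ => (Real.rpow_pos_of_pos hq0 _).le) hkmem
  constructor
  · rw [hS]
    calc t * q ^ E = q ^ E * t := mul_comm _ _
      _ ≤ q ^ E * ∑ r ∈ Finset.Ico 1 m, q ^ (-2 * ((r : ℝ) - ρ) ^ 2) := by
          exact mul_le_mul_of_nonneg_left hT_lower hqE.le
  · rw [hS]
    calc q ^ E * ∑ r ∈ Finset.Ico 1 m, q ^ (-2 * ((r : ℝ) - ρ) ^ 2)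
        ≤ q ^ E * (2 / (1 - t)) := mul_le_mul_of_nonneg_left hT_upper hqE.le
      _ = 2 / (1 - t) * q ^ E := mul_comm _ _
end

section
/- Let q be a prime power, m ≥ 0 and k ≥ 1 integers, and r_1,…,r_k integers with 0 ≤ r_i ≤ m. Then the number of k-tuples (W_1,…,W_k) of 𝔽_q-linear subspaces of 𝔽_q^m with dim W_i = r_i for all i and W_1 ∩ W_2 ∩ ⋯ ∩ W_k = {0} equals Σ_{a=0}^{min_i r_i} (−1)^a q^{binom(a,2)} [m choose a]_q ∏_{i=1}^k [m−a choose r_i−a]_q. -/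
namespace QAux

variable {x : ℝ}

/-- shifted product `P m = ∏_{j<m} (x^{j+1} - 1)`. -/
noncomputable def P (x : ℝ) (m : ℕ) : ℝ := ∏ j ∈ Finset.range m, (x ^ (j + 1) - 1)

lemma P_pos (hx : 1 < x) (m : ℕ) : 0 < P x m := by
  apply Finset.prod_pos
  intro j _
  have : (1 : ℝ) < x ^ (j + 1) := one_lt_pow₀ hx (Nat.succ_ne_zero j)
  linarith

lemma P_ne (hx : 1 < x) (m : ℕ) : P x m ≠ 0 := (P_pos hx m).ne'

lemma qInt_pos (hx : 1 < x) (m : ℕ) : 0 < qInt x (m + 1) := by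
  unfold qInt
  apply Finset.sum_pos
  · intro i _; positivity
  · exact Finset.nonempty_range_add_one

lemma qFact_pos (hx : 1 < x) (m : ℕ) : 0 < qFact x m := by
  apply Finset.prod_pos
  intro j _; exact qInt_pos hx j

lemma qFact_ne (hx : 1 < x) (m : ℕ) : qFact x m ≠ 0 := (qFact_pos hx m).ne'

lemma qInt_eq (hx : 1 < x) (m : ℕ) : qInt x m = (x ^ m - 1) / (x - 1) :=
  geom_sum_eq hx.ne' m

lemma qFact_eq (hx : 1 < x) (m : ℕ) : qFact x m = P x m / (x - 1) ^ m := by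
  unfold qFact P
  calc ∏ i ∈ Finset.range m, qInt x (i + 1)
      = ∏ i ∈ Finset.range m, ((x ^ (i + 1) - 1) / (x - 1)) :=
        Finset.prod_congr rfl fun j _ => qInt_eq hx (j + 1)
    _ = (∏ i ∈ Finset.range m, (x ^ (i + 1) - 1)) / ∏ _i ∈ Finset.range m, (x - 1) :=
        Finset.prod_div_distrib _ _
    _ = (∏ i ∈ Finset.range m, (x ^ (i + 1) - 1)) / (x - 1) ^ m := by
        rw [Finset.prod_const, Finset.card_range]

lemma qBinom_eq (hx : 1 < x) {n a : ℕ} (h : a ≤ n) :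
    qBinom x n a = P x n / (P x a * P x (n - a)) := by
  have hx1 : x - 1 ≠ 0 := sub_ne_zero.mpr hx.ne'
  unfold qBinom
  rw [qFact_eq hx, qFact_eq hx, qFact_eq hx]
  have hpow : (x - 1) ^ a * (x - 1) ^ (n - a) = (x - 1) ^ n := by
    rw [← pow_add]; congr 1; omega
  rw [← hpow]
  have h1 := P_ne hx a
  have h2 := P_ne hx (n - a)
  field_simp


/-- `∏_{i<a} (x^n - x^i) = (∏_{i<a} x^i) * (P n / P (n-a))` for `a ≤ n`. -/
lemma prod_sub_pow (hx : 1 < x) {n a : ℕ} (h : a ≤ n) :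
    ∏ i ∈ Finset.range a, (x ^ n - x ^ i)
      = (∏ i ∈ Finset.range a, x ^ i) * (P x n / P x (n - a)) := by
  have key : ∏ i ∈ Finset.range a, (x ^ n - x ^ i)
      = (∏ i ∈ Finset.range a, x ^ i) * ∏ i ∈ Finset.range a, (x ^ (n - i) - 1) := by
    rw [← Finset.prod_mul_distrib]
    refine Finset.prod_congr rfl fun i hi => ?_
    have hi' : i < a := Finset.mem_range.mp hi
    have : x ^ i * x ^ (n - i) = x ^ n := by rw [← pow_add]; congr 1; omega
    rw [mul_sub, mul_one, this]
  rw [key]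
  congr 1
  have split : P x n = P x (n - a) * ∏ i ∈ Finset.range a, (x ^ (n - a + i + 1) - 1) := by
    unfold P
    conv_lhs => rw [show n = n - a + a from by omega]
    exact Finset.prod_range_add (fun j => (x ^ (j + 1) - 1)) (n - a) a
  have refl : ∏ i ∈ Finset.range a, (x ^ (n - i) - 1)
      = ∏ i ∈ Finset.range a, (x ^ (n - a + i + 1) - 1) := by
    rw [← Finset.prod_range_reflect (fun i => (x ^ (n - i) - 1)) a]
    refine Finset.prod_congr rfl fun i hi => ?_
    have hi' : i < a := Finset.mem_range.mp hi
    congr 2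
    omega
  rw [refl, split]
  field_simp [P_ne hx (n - a)]

/-- main product identity. -/
lemma qBinom_mul_prod (hx : 1 < x) {n a : ℕ} (h : a ≤ n) :
    qBinom x n a * ∏ i ∈ Finset.range a, (x ^ a - x ^ i)
      = ∏ i ∈ Finset.range a, (x ^ n - x ^ i) := by
  rw [qBinom_eq hx h, prod_sub_pow hx h, prod_sub_pow hx (le_refl a)]
  rw [Nat.sub_self]
  have hP0 : P x 0 = 1 := by simp [P]
  rw [hP0]
  have := P_ne hx n
  have := P_ne hx a
  have := P_ne hx (n - a)
  field_simp

/-- q-Pascal identity. -/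
lemma qPascal (hx : 1 < x) (b c : ℕ) :
    qBinom x (b + c + 2) (b + 1)
      = qBinom x (b + c + 1) b + x ^ (b + 1) * qBinom x (b + c + 1) (b + 1) := by
  have hsplit : qInt x (b + c + 2) = qInt x (b + 1) + x ^ (b + 1) * qInt x (c + 1) := by
    unfold qInt
    rw [show b + c + 2 = (b + 1) + (c + 1) by ring, Finset.sum_range_add, Finset.mul_sum]
    congr 1
    refine Finset.sum_congr rfl fun i _ => ?_
    rw [← pow_add]
  have e1 : b + c + 2 - (b + 1) = c + 1 := by omega
  have e2 : b + c + 1 - b = c + 1 := by omega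
  have e3 : b + c + 1 - (b + 1) = c := by omega
  unfold qBinom
  rw [e1, e2, e3]
  have F1 : qFact x (b + c + 2) = qFact x (b + c + 1) * qInt x (b + c + 2) := by
    unfold qFact; rw [Finset.prod_range_succ]
  have F2 : qFact x (b + 1) = qFact x b * qInt x (b + 1) := by
    unfold qFact; rw [Finset.prod_range_succ]
  have F3 : qFact x (c + 1) = qFact x c * qInt x (c + 1) := by
    unfold qFact; rw [Finset.prod_range_succ]
  rw [F1, hsplit, F2, F3]
  have hb := (qInt_pos hx b).ne'
  have hc := (qInt_pos hx c).ne'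
  have hfb := qFact_ne hx b
  have hfc := qFact_ne hx c
  have hfbc := qFact_ne hx (b + c + 1)
  field_simp

lemma tri_succ (i : ℕ) : (i + 1) * i / 2 = i * (i - 1) / 2 + i := by
  have h1 := Nat.choose_two_right (i + 1)
  have h2 := Nat.choose_two_right i
  have h3 : (i + 1).choose 2 = i.choose 1 + i.choose 2 := Nat.choose_succ_succ i 1
  rw [Nat.choose_one_right] at h3
  simp only [Nat.add_sub_cancel] at h1
  omega

lemma qBinom_self (hx : 1 < x) (n : ℕ) : qBinom x n n = 1 := by
  unfold qBinom
  rw [Nat.sub_self]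
  have h0 : qFact x 0 = 1 := by simp [qFact]
  rw [h0, mul_one, div_self (qFact_ne hx n)]

lemma qBinom_zero (hx : 1 < x) (n : ℕ) : qBinom x n 0 = 1 := by
  unfold qBinom
  have h0 : qFact x 0 = 1 := by simp [qFact]
  rw [Nat.sub_zero, h0, one_mul, div_self (qFact_ne hx n)]

/-- The alternating-sum identity: `∑_{a=0}^{d} (-1)^a x^{C(a,2)} [d,a]_x = 0` for `d ≥ 1`. -/
lemma alternating (hx : 1 < x) (e : ℕ) :
    ∑ a ∈ Finset.range (e + 2),
      (-1 : ℝ) ^ a * x ^ (a * (a - 1) / 2) * qBinom x (e + 1) a = 0 := by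
  set t : ℕ → ℝ := fun a => (-1 : ℝ) ^ a * x ^ (a * (a - 1) / 2) * qBinom x (e + 1) a with ht
  set w : ℕ → ℝ := fun i => (-1 : ℝ) ^ i * x ^ (i * (i - 1) / 2 + i) * qBinom x e i with hw
  have hmid : ∀ i < e, t (i + 1) = w (i + 1) - w i := by
    intro i hi
    have hpas : qBinom x (e + 1) (i + 1)
        = qBinom x e i + x ^ (i + 1) * qBinom x e (i + 1) := by
      have := qPascal hx i (e - 1 - i)
      have h1 : i + (e - 1 - i) + 2 = e + 1 := by omega
      have h2 : i + (e - 1 - i) + 1 = e := by omega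
      rwa [h1, h2] at this
    have hts : (i + 1) * (i + 1 - 1) / 2 = i * (i - 1) / 2 + i := by
      rw [Nat.add_sub_cancel]; exact tri_succ i
    simp only [ht, hw, hpas, hts]
    ring
  rw [Finset.sum_range_succ, Finset.sum_range_succ']
  have hms : ∑ i ∈ Finset.range e, t (i + 1) = ∑ i ∈ Finset.range e, (w (i + 1) - w i) :=
    Finset.sum_congr rfl fun i hi => hmid i (Finset.mem_range.mp hi)
  rw [hms, Finset.sum_range_sub]
  have ht0 : t 0 = 1 := by simp [ht, qBinom_zero hx]
  have hw0 : w 0 = 1 := by simp [hw, qBinom_zero hx]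
  have hwe : w e = (-1 : ℝ) ^ e * x ^ (e * (e - 1) / 2 + e) := by
    simp [hw, qBinom_self hx]
  have hte : t (e + 1) = (-1 : ℝ) ^ (e + 1) * x ^ ((e + 1) * e / 2) := by
    simp [ht, qBinom_self hx]
  rw [hwe, hw0]
  have h0 : (0 * (0 - 1) / 2 : ℕ) = 0 := rfl
  have he : (e + 1) * (e + 1 - 1) / 2 = e * (e - 1) / 2 + e := by
    rw [Nat.add_sub_cancel]; exact tri_succ e
  simp only [qBinom_zero hx, qBinom_self hx, h0, he, pow_zero, mul_one, one_mul]
  ring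

end QAux

section Counting

open Module Submodule

variable {F : Type} [Field F] [Fintype F]

instance auxFiniteSubmodule {V : Type} [AddCommGroup V] [Module F V] [Finite V] :
    Finite (Submodule F V) :=
  Finite.of_injective _ (SetLike.coe_injective (A := Submodule F V))

instance auxModFinite {V : Type} [AddCommGroup V] [Module F V] [Finite V] :
    Module.Finite F V := Module.Finite.of_finite

/-- number of subspaces of dimension `a`. -/
noncomputable def cs (F V : Type) [Field F] [AddCommGroup V] [Module F V] (a : ℕ) : ℕ :=
  Nat.card {W : Submodule F V // Module.finrank F ↥W = a}

noncomputable def fiberEquiv {V : Type} [AddCommGroup V] [Module F V] [Finite V] (a : ℕ)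
    (W : {W : Submodule F V // Module.finrank F ↥W = a}) :
    {s : {s : Fin a → V // LinearIndependent F s} //
        Submodule.span F (Set.range s.1) = W.1} ≃
      {t : Fin a → ↥W.1 // LinearIndependent F t} where
  toFun s := ⟨fun i => ⟨s.1.1 i, by
      have h := Submodule.subset_span (R := F) (Set.mem_range_self (f := s.1.1) i)
      rwa [s.2] at h⟩,
    LinearIndependent.of_comp W.1.subtype s.1.2⟩
  invFun t := ⟨⟨fun i => (t.1 i : V), t.2.map' W.1.subtype (Submodule.ker_subtype W.1)⟩, by
    have hspan : Submodule.span F (Set.range t.1) = ⊤ :=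
      t.2.span_eq_top_of_card_eq_finrank' (by rw [Fintype.card_fin, W.2])
    show Submodule.span F (Set.range (fun i => (t.1 i : V))) = W.1
    have h2 : (fun i => (t.1 i : V)) = W.1.subtype ∘ t.1 := rfl
    rw [h2, Set.range_comp, Submodule.span_image, hspan, Submodule.map_subtype_top]⟩
  left_inv s := Subtype.ext (Subtype.ext rfl)
  right_inv t := Subtype.ext (funext fun i => Subtype.ext rfl)

lemma cs_mul {V : Type} [AddCommGroup V] [Module F V] [Finite V] {a : ℕ}
    (ha : a ≤ Module.finrank F V) :
    (cs F V a) * ∏ i ∈ Finset.range a, (Fintype.card F ^ a - Fintype.card F ^ i)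
      = ∏ i ∈ Finset.range a, (Fintype.card F ^ Module.finrank F V - Fintype.card F ^ i) := by
  classical
  set B := {W : Submodule F V // Module.finrank F ↥W = a}
  letI : Fintype B := Fintype.ofFinite _
  set f : {s : Fin a → V // LinearIndependent F s} → B := fun s =>
    (⟨Submodule.span F (Set.range s.1), by
      rw [finrank_span_eq_card s.2, Fintype.card_fin]⟩ : B) with hf
  have htot : Nat.card {s : Fin a → V // LinearIndependent F s}
      = ∏ i ∈ Finset.range a, (Fintype.card F ^ Module.finrank F V - Fintype.card F ^ i) := by
    rw [card_linearIndependent ha, ← Fin.prod_univ_eq_prod_range]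
  have hsig : Nat.card {s : Fin a → V // LinearIndependent F s}
      = ∑ W : B, Nat.card {s : {s : Fin a → V // LinearIndependent F s} // f s = W} := by
    rw [← Nat.card_congr (Equiv.sigmaFiberEquiv f)]
    letI : ∀ W : B, Fintype {s // f s = W} := fun W => Fintype.ofFinite _
    rw [Nat.card_eq_fintype_card, Fintype.card_sigma]
    exact Finset.sum_congr rfl fun W _ => (Nat.card_eq_fintype_card).symm
  have hfib : ∀ W : B, Nat.card {s : {s : Fin a → V // LinearIndependent F s} // f s = W}
      = ∏ i ∈ Finset.range a, (Fintype.card F ^ a - Fintype.card F ^ i) := by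
    intro W
    have he : {s : {s : Fin a → V // LinearIndependent F s} // f s = W}
        ≃ {s : {s : Fin a → V // LinearIndependent F s} //
            Submodule.span F (Set.range s.1) = W.1} :=
      Equiv.subtypeEquivRight fun s => by
        constructor
        · intro h; rw [← h]
        · intro h; exact Subtype.ext h
    rw [Nat.card_congr he, Nat.card_congr (fiberEquiv a W)]
    have hfr : a ≤ Module.finrank F ↥W.1 := by rw [W.2]
    rw [card_linearIndependent hfr, W.2, ← Fin.prod_univ_eq_prod_range]
  rw [hsig] at htot
  rw [← htot]
  simp only [hfib]
  rw [Finset.sum_const, Finset.card_univ, smul_eq_mul]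
  congr 1
  rw [cs, Nat.card_eq_fintype_card]

lemma cs_eq_qBinom {V : Type} [AddCommGroup V] [Module F V] [Finite V] {n a : ℕ}
    (hn : Module.finrank F V = n) (ha : a ≤ n) :
    (cs F V a : ℝ) = qBinom (Fintype.card F : ℝ) n a := by
  have hq : (1 : ℝ) < (Fintype.card F : ℝ) := by exact_mod_cast Fintype.one_lt_card
  have hq1 : 1 ≤ Fintype.card F := Fintype.card_pos
  set x : ℝ := (Fintype.card F : ℝ) with hx
  have hmul := cs_mul (F := F) (V := V) (a := a) (by rw [hn]; exact ha)
  rw [hn] at hmul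
  have hcast : (cs F V a : ℝ) * ∏ i ∈ Finset.range a, (x ^ a - x ^ i)
      = ∏ i ∈ Finset.range a, (x ^ n - x ^ i) := by
    have c1 : ∀ b : ℕ, a ≤ b → ((∏ i ∈ Finset.range a,
        (Fintype.card F ^ b - Fintype.card F ^ i) : ℕ) : ℝ)
        = ∏ i ∈ Finset.range a, (x ^ b - x ^ i) := by
      intro b hb
      rw [Nat.cast_prod]
      refine Finset.prod_congr rfl fun i hi => ?_
      have hi' : i < a := Finset.mem_range.mp hi
      have hle : Fintype.card F ^ i ≤ Fintype.card F ^ b :=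
        Nat.pow_le_pow_right Fintype.card_pos (by omega)
      rw [Nat.cast_sub hle, Nat.cast_pow, Nat.cast_pow]
    rw [← c1 a (le_refl a), ← c1 n ha, ← Nat.cast_mul, hmul]
  have hne : ∏ i ∈ Finset.range a, (x ^ a - x ^ i) ≠ 0 := by
    apply Finset.prod_ne_zero_iff.mpr
    intro i hi
    have hi' : i < a := Finset.mem_range.mp hi
    have : x ^ i < x ^ a := pow_lt_pow_right₀ hq hi'
    linarith
  have hq2 := QAux.qBinom_mul_prod (x := x) hq ha
  have := hcast.trans hq2.symm
  exact mul_right_cancel₀ hne this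

lemma finrank_comap_mkQ {V : Type} [AddCommGroup V] [Module F V] [Finite V]
    (U : Submodule F V) (w' : Submodule F (V ⧸ U)) :
    Module.finrank F ↥(Submodule.comap U.mkQ w')
      = Module.finrank F ↥w' + Module.finrank F ↥U := by
  set W := Submodule.comap U.mkQ w' with hW
  have hUW : U ≤ W := Submodule.le_comap_mkQ U w'
  set f : ↥W →ₗ[F] V ⧸ U := U.mkQ.comp W.subtype with hf
  have hrange : LinearMap.range f = w' := by
    rw [hf, LinearMap.range_comp, Submodule.range_subtype, hW,
      Submodule.map_comap_eq, Submodule.range_mkQ, top_inf_eq]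
  have hker : Module.finrank F ↥(LinearMap.ker f) = Module.finrank F ↥U := by
    rw [hf, LinearMap.ker_comp, Submodule.ker_mkQ]
    have h1 : Submodule.map W.subtype (Submodule.comap W.subtype U) = U := by
      rw [Submodule.map_comap_subtype, inf_eq_right.mpr hUW]
    conv_rhs => rw [← h1]
    rw [Submodule.finrank_map_subtype_eq]
  have hh := LinearMap.finrank_range_add_finrank_ker f
  rw [hrange, hker] at hh
  exact hh.symm

lemma card_above {V : Type} [AddCommGroup V] [Module F V] [Finite V]
    (U : Submodule F V) {rr : ℕ} (h : Module.finrank F ↥U ≤ rr) :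
    Nat.card {w : Submodule F V // Module.finrank F ↥w = rr ∧ U ≤ w}
      = cs F (V ⧸ U) (rr - Module.finrank F ↥U) := by
  rw [cs]
  apply Nat.card_congr
  exact {
    toFun := fun w => ⟨Submodule.map U.mkQ w.1, by
      have hc : Submodule.comap U.mkQ (Submodule.map U.mkQ w.1) = w.1 := by
        rw [Submodule.comap_map_mkQ, sup_eq_right.mpr w.2.2]
      have h2 := finrank_comap_mkQ U (Submodule.map U.mkQ w.1)
      rw [hc, w.2.1] at h2
      omega⟩
    invFun := fun w' => ⟨Submodule.comap U.mkQ w'.1, by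
      constructor
      · rw [finrank_comap_mkQ U w'.1, w'.2]; omega
      · exact Submodule.le_comap_mkQ U w'.1⟩
    left_inv := fun w => Subtype.ext (by
      simp only
      rw [Submodule.comap_map_mkQ, sup_eq_right.mpr w.2.2])
    right_inv := fun w' => Subtype.ext (by
      simp only
      rw [Submodule.map_comap_eq, Submodule.range_mkQ, top_inf_eq]) }

lemma card_above_empty {V : Type} [AddCommGroup V] [Module F V] [Finite V]
    (U : Submodule F V) {rr : ℕ} (h : rr < Module.finrank F ↥U) :
    Nat.card {w : Submodule F V // Module.finrank F ↥w = rr ∧ U ≤ w} = 0 := by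
  have he : IsEmpty {w : Submodule F V // Module.finrank F ↥w = rr ∧ U ≤ w} := by
    constructor
    rintro ⟨w, hw1, hw2⟩
    have := Submodule.finrank_mono hw2
    omega
  exact Nat.card_of_isEmpty

lemma card_G {V : Type} [AddCommGroup V] [Module F V] [Finite V] {k : ℕ} (r : Fin k → ℕ)
    (U : Submodule F V) :
    Nat.card {W : Fin k → Submodule F V //
        (∀ i, Module.finrank F ↥(W i) = r i) ∧ U ≤ ⨅ i, W i}
      = ∏ i, Nat.card {w : Submodule F V // Module.finrank F ↥w = r i ∧ U ≤ w} := by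
  classical
  rw [← Nat.card_pi]
  apply Nat.card_congr
  have e1 : {W : Fin k → Submodule F V //
        (∀ i, Module.finrank F ↥(W i) = r i) ∧ U ≤ ⨅ i, W i}
      ≃ {W : Fin k → Submodule F V //
        ∀ i, (Module.finrank F ↥(W i) = r i ∧ U ≤ W i)} :=
    Equiv.subtypeEquivRight fun W => by
      rw [le_iInf_iff]
      constructor
      · rintro ⟨h1, h2⟩ i; exact ⟨h1 i, h2 i⟩
      · intro h; exact ⟨fun i => (h i).1, fun i => (h i).2⟩
  exact e1.trans (Equiv.subtypePiEquivPi
    (p := fun (i : Fin k) (w : Submodule F V) => Module.finrank F ↥w = r i ∧ U ≤ w))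

open scoped Classical in
lemma mu_sum {V : Type} [AddCommGroup V] [Module F V] [Finite V]
    [Fintype (Submodule F V)] (U' : Submodule F V) :
    ∑ U : Submodule F V, (if U ≤ U' then
        (-1 : ℝ) ^ (Module.finrank F ↥U) *
          (Fintype.card F : ℝ) ^
            (Module.finrank F ↥U * (Module.finrank F ↥U - 1) / 2) else 0)
      = if U' = ⊥ then 1 else 0 := by
  classical
  set x : ℝ := (Fintype.card F : ℝ) with hx
  have hx1 : (1 : ℝ) < x := by rw [hx]; exact_mod_cast Fintype.one_lt_card
  set μ : ℕ → ℝ := fun a => (-1 : ℝ) ^ a * x ^ (a * (a - 1) / 2) with hμ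
  set d := Module.finrank F ↥U' with hd
  letI : Fintype (Submodule F ↥U') := Fintype.ofFinite _
  have h1 : ∑ U : Submodule F V, (if U ≤ U' then μ (Module.finrank F ↥U) else 0)
      = ∑ W : Submodule F ↥U', μ (Module.finrank F ↥W) := by
    rw [← Finset.sum_filter]
    rw [Finset.sum_subtype (p := fun U => U ≤ U') (Finset.univ.filter (· ≤ U'))
      (fun U => by simp) (fun U => μ (Module.finrank F ↥U))]
    refine (Fintype.sum_equiv (Submodule.MapSubtype.orderIso U').toEquiv _ _ ?_).symm
    intro W
    congr 1
    exact (Submodule.finrank_map_subtype_eq U' W).symm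
  have h2 : ∑ W : Submodule F ↥U', μ (Module.finrank F ↥W)
      = ∑ a ∈ Finset.range (d + 1), (cs F ↥U' a : ℝ) * μ a := by
    rw [← Finset.sum_fiberwise_of_maps_to
      (g := fun W : Submodule F ↥U' => Module.finrank F ↥W)
      (t := Finset.range (d + 1))
      (fun W _ => Finset.mem_range.mpr (Nat.lt_succ_of_le (Submodule.finrank_le W)))
      (fun W => μ (Module.finrank F ↥W))]
    refine Finset.sum_congr rfl fun a _ => ?_
    have hcon : ∀ W ∈ Finset.univ.filter
        (fun W : Submodule F ↥U' => Module.finrank F ↥W = a),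
        μ (Module.finrank F ↥W) = μ a := fun W hW => by
      rw [show Module.finrank F ↥W = a from (Finset.mem_filter.mp hW).2]
    rw [Finset.sum_congr rfl hcon, Finset.sum_const, nsmul_eq_mul]
    congr 1
    rw [cs, Nat.card_eq_fintype_card, Fintype.card_subtype]
  have h3 : ∀ a ∈ Finset.range (d + 1), (cs F ↥U' a : ℝ) = qBinom x d a := by
    intro a ha
    exact cs_eq_qBinom rfl (by have := Finset.mem_range.mp ha; omega)
  rw [show (∑ U : Submodule F V, (if U ≤ U' then
      (-1 : ℝ) ^ (Module.finrank F ↥U) *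
        x ^ (Module.finrank F ↥U * (Module.finrank F ↥U - 1) / 2) else 0))
      = ∑ U : Submodule F V, (if U ≤ U' then μ (Module.finrank F ↥U) else 0) from rfl]
  rw [h1, h2, Finset.sum_congr rfl (fun a ha => by rw [h3 a ha])]
  by_cases hd0 : d = 0
  · have hbot : U' = ⊥ := Submodule.finrank_eq_zero.mp hd0
    rw [if_pos hbot, hd0, Finset.sum_range_one]
    simp [hμ, QAux.qBinom_zero hx1]
  · have hbot : ¬(U' = ⊥) := fun hb => hd0 (by rw [hd, hb]; exact finrank_bot F V)
    rw [if_neg hbot]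
    obtain ⟨e, he⟩ : ∃ e, d = e + 1 := ⟨d - 1, by omega⟩
    rw [he]
    have := QAux.alternating hx1 e
    rw [← this]
    refine Finset.sum_congr rfl fun a _ => ?_
    rw [hμ]
    ring

end Counting

/-- The Möbius-inversion count of `k`-tuples `(W_1, …, W_k)` of subspaces of `F_q^m`
with `dim W_i = r_i` and `W_1 ∩ ⋯ ∩ W_k = {0}`. -/
theorem tuples_of_subspaces_with_zero_intersection
    (F : Type) [Field F] [Fintype F] (q : ℝ) (hq : q = Fintype.card F)
    (m k : ℕ) [NeZero k] (r : Fin k → ℕ) (hr : ∀ i, r i ≤ m) :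
    (Nat.card {W : Fin k → Submodule F (Fin m → F) //
        (∀ i, Module.finrank F (W i) = r i) ∧ (⨅ i, W i) = ⊥} : ℝ)
    = ∑ a ∈ Finset.range (Finset.univ.inf' Finset.univ_nonempty r + 1),
        (-1 : ℝ) ^ a * q ^ (a * (a - 1) / 2) * qBinom q m a *
          ∏ i, qBinom q (m - a) (r i - a) := by
  classical
  subst hq
  set x : ℝ := (Fintype.card F : ℝ) with hx
  have hx1 : (1 : ℝ) < x := by rw [hx]; exact_mod_cast Fintype.one_lt_card
  letI : Fintype (Submodule F (Fin m → F)) := Fintype.ofFinite _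
  have hmV : Module.finrank F (Fin m → F) = m := Module.finrank_fin_fun F
  set P : (Fin k → Submodule F (Fin m → F)) → Prop :=
    fun W => ∀ i, Module.finrank F ↥(W i) = r i with hP
  set TT : Submodule F (Fin m → F) → ℕ :=
    fun U => (Finset.univ.filter fun W => P W ∧ (⨅ i, W i) = U).card with hTT
  set GG : Submodule F (Fin m → F) → ℕ :=
    fun U => (Finset.univ.filter fun W => P W ∧ U ≤ ⨅ i, W i).card with hGG
  have hLHS : Nat.card {W : Fin k → Submodule F (Fin m → F) //
      (∀ i, Module.finrank F ↥(W i) = r i) ∧ (⨅ i, W i) = ⊥} = TT ⊥ := by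
    rw [Nat.card_eq_fintype_card, hTT]
    exact Fintype.card_subtype _
  have hfib : ∀ U : Submodule F (Fin m → F),
      GG U = ∑ U' : Submodule F (Fin m → F), if U ≤ U' then TT U' else 0 := by
    intro U
    rw [hGG]
    simp only
    rw [Finset.card_eq_sum_card_fiberwise (f := fun W => ⨅ i, W i)
      (t := Finset.univ.filter (fun U' => U ≤ U'))
      (fun W hW => Finset.mem_filter.mpr ⟨Finset.mem_univ _, (Finset.mem_filter.mp hW).2.2⟩)]
    rw [Finset.sum_filter]
    refine Finset.sum_congr rfl fun U' _ => ?_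
    by_cases hUU : U ≤ U'
    · rw [if_pos hUU, if_pos hUU, hTT]
      simp only
      rw [Finset.filter_filter]
      congr 1
      apply Finset.filter_congr
      intro W _
      constructor
      · rintro ⟨⟨h1, _⟩, h3⟩; exact ⟨h1, h3⟩
      · rintro ⟨h1, h3⟩
        refine ⟨⟨h1, ?_⟩, h3⟩
        rw [h3]; exact hUU
    · rw [if_neg hUU, if_neg hUU]
  have hGval : ∀ U : Submodule F (Fin m → F),
      (GG U : ℝ) = if (∀ i, Module.finrank F ↥U ≤ r i)
        then ∏ i, qBinom x (m - Module.finrank F ↥U) (r i - Module.finrank F ↥U) else 0 := by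
    intro U
    have hceq : GG U = Nat.card {W : Fin k → Submodule F (Fin m → F) //
        (∀ i, Module.finrank F ↥(W i) = r i) ∧ U ≤ ⨅ i, W i} := by
      rw [hGG, Nat.card_eq_fintype_card]
      exact (Fintype.card_subtype _).symm
    rw [hceq, card_G r U]
    by_cases hall : ∀ i, Module.finrank F ↥U ≤ r i
    · rw [if_pos hall, Nat.cast_prod]
      refine Finset.prod_congr rfl fun i _ => ?_
      rw [card_above U (hall i)]
      have hquot : Module.finrank F ((Fin m → F) ⧸ U) = m - Module.finrank F ↥U := by
        have h1 := Submodule.finrank_quotient_add_finrank U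
        rw [hmV] at h1
        exact Nat.eq_sub_of_add_eq h1
      exact cs_eq_qBinom hquot (Nat.sub_le_sub_right (hr i) _)
    · rw [if_neg hall]
      push_neg at hall
      obtain ⟨i0, hi0⟩ := hall
      rw [Finset.prod_eq_zero (Finset.mem_univ i0) (card_above_empty U hi0), Nat.cast_zero]
  rw [hLHS]
  have step1 : ((TT ⊥ : ℕ) : ℝ)
      = ∑ U' : Submodule F (Fin m → F), (if U' = ⊥ then (TT U' : ℝ) else 0) := by
    rw [Finset.sum_ite_eq' Finset.univ ⊥ (fun U' => (TT U' : ℝ)), if_pos (Finset.mem_univ _)]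
  have step2 : (∑ U' : Submodule F (Fin m → F), (if U' = ⊥ then (TT U' : ℝ) else 0))
      = ∑ U' : Submodule F (Fin m → F), (TT U' : ℝ) *
          ∑ U : Submodule F (Fin m → F), (if U ≤ U' then ((-1 : ℝ) ^ (Module.finrank F ↥U) * x ^ (Module.finrank F ↥U * (Module.finrank F ↥U - 1) / 2)) else 0) := by
    refine Finset.sum_congr rfl fun U' _ => ?_
    rw [show (∑ U : Submodule F (Fin m → F), (if U ≤ U' then ((-1 : ℝ) ^ (Module.finrank F ↥U) * x ^ (Module.finrank F ↥U * (Module.finrank F ↥U - 1) / 2)) else 0))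
        = (if U' = ⊥ then (1 : ℝ) else 0) from mu_sum U']
    by_cases h : U' = ⊥ <;> simp [h]
  have step3 : (∑ U' : Submodule F (Fin m → F), (TT U' : ℝ) *
        ∑ U : Submodule F (Fin m → F), (if U ≤ U' then ((-1 : ℝ) ^ (Module.finrank F ↥U) * x ^ (Module.finrank F ↥U * (Module.finrank F ↥U - 1) / 2)) else 0))
      = ∑ U : Submodule F (Fin m → F), ((-1 : ℝ) ^ (Module.finrank F ↥U) * x ^ (Module.finrank F ↥U * (Module.finrank F ↥U - 1) / 2)) * (GG U : ℝ) := by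
    have e1 : ∀ U' : Submodule F (Fin m → F), (TT U' : ℝ) *
          (∑ U : Submodule F (Fin m → F), (if U ≤ U' then ((-1 : ℝ) ^ (Module.finrank F ↥U) * x ^ (Module.finrank F ↥U * (Module.finrank F ↥U - 1) / 2)) else 0))
        = ∑ U : Submodule F (Fin m → F), (if U ≤ U' then ((-1 : ℝ) ^ (Module.finrank F ↥U) * x ^ (Module.finrank F ↥U * (Module.finrank F ↥U - 1) / 2)) * TT U' else 0) := by
      intro U'
      rw [Finset.mul_sum]
      exact Finset.sum_congr rfl fun U _ => by
        by_cases h : U ≤ U' <;> simp [h, mul_comm]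
    rw [Finset.sum_congr rfl fun U' _ => e1 U', Finset.sum_comm]
    refine Finset.sum_congr rfl fun U _ => ?_
    rw [hfib U]
    push_cast
    rw [Finset.mul_sum]
    exact Finset.sum_congr rfl fun U' _ => by by_cases h : U ≤ U' <;> simp [h]
  have step4 : (∑ U : Submodule F (Fin m → F), ((-1 : ℝ) ^ (Module.finrank F ↥U) * x ^ (Module.finrank F ↥U * (Module.finrank F ↥U - 1) / 2)) * (GG U : ℝ))
      = ∑ a ∈ Finset.range (m + 1), ((Finset.univ.filter (fun U : Submodule F (Fin m → F) => Module.finrank F ↥U = a)).card : ℝ) *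
          (((-1 : ℝ) ^ a * x ^ (a * (a - 1) / 2)) * (if (∀ i, a ≤ r i) then ∏ i, qBinom x (m - a) (r i - a) else 0)) := by
    rw [← Finset.sum_fiberwise_of_maps_to (g := fun U : Submodule F (Fin m → F) => Module.finrank F ↥U) (t := Finset.range (m + 1))
      (fun U _ => Finset.mem_range.mpr (Nat.lt_succ_of_le (by
        have h := Submodule.finrank_le U
        rw [hmV] at h
        exact h)))
      (fun U => ((-1 : ℝ) ^ (Module.finrank F ↥U) * x ^ (Module.finrank F ↥U * (Module.finrank F ↥U - 1) / 2)) * (GG U : ℝ))]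
    refine Finset.sum_congr rfl fun a _ => ?_
    have hcon : ∀ U ∈ Finset.univ.filter (fun U : Submodule F (Fin m → F) => Module.finrank F ↥U = a),
        ((-1 : ℝ) ^ (Module.finrank F ↥U) * x ^ (Module.finrank F ↥U * (Module.finrank F ↥U - 1) / 2)) * (GG U : ℝ)
          = ((-1 : ℝ) ^ a * x ^ (a * (a - 1) / 2)) * (if (∀ i, a ≤ r i) then ∏ i, qBinom x (m - a) (r i - a) else 0) := by
      intro U hU
      have ha : Module.finrank F ↥U = a := (Finset.mem_filter.mp hU).2
      rw [hGval U, ha]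
    rw [Finset.sum_congr rfl hcon, Finset.sum_const, nsmul_eq_mul]
  have hcard_cs : ∀ a : ℕ,
      ((Finset.univ.filter (fun U : Submodule F (Fin m → F) => Module.finrank F ↥U = a)).card : ℕ)
        = cs F (Fin m → F) a := by
    intro a
    rw [cs, Nat.card_eq_fintype_card]
    exact (Fintype.card_subtype _).symm
  rw [step1, step2, step3, step4]
  have step5 : ∀ a ∈ Finset.range (m + 1),
      ((Finset.univ.filter (fun U : Submodule F (Fin m → F) => Module.finrank F ↥U = a)).card : ℝ) *
          (((-1 : ℝ) ^ a * x ^ (a * (a - 1) / 2)) * (if (∀ i, a ≤ r i) then ∏ i, qBinom x (m - a) (r i - a) else 0))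
        = qBinom x m a *
          (((-1 : ℝ) ^ a * x ^ (a * (a - 1) / 2)) * (if (∀ i, a ≤ r i) then ∏ i, qBinom x (m - a) (r i - a) else 0)) := by
    intro a ha
    congr 1
    rw [hcard_cs a]
    exact cs_eq_qBinom hmV (Nat.lt_succ_iff.mp (Finset.mem_range.mp ha))
  rw [Finset.sum_congr rfl step5]
  obtain ⟨i0, _, hi0⟩ := Finset.exists_mem_eq_inf' (Finset.univ_nonempty) r
  have hsub : Finset.range (Finset.univ.inf' Finset.univ_nonempty r + 1)
      ⊆ Finset.range (m + 1) := by
    intro a ha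
    rw [Finset.mem_range] at *
    exact lt_of_lt_of_le ha (Nat.succ_le_succ (le_trans (le_of_eq hi0) (hr i0)))
  have hvanish : ∀ a ∈ Finset.range (m + 1),
      a ∉ Finset.range (Finset.univ.inf' Finset.univ_nonempty r + 1) →
      qBinom x m a * (((-1 : ℝ) ^ a * x ^ (a * (a - 1) / 2)) * (if (∀ i, a ≤ r i) then ∏ i, qBinom x (m - a) (r i - a) else 0))
        = 0 := by
    intro a _ ha
    rw [Finset.mem_range, not_lt] at ha
    have hnall : ¬ (∀ i, a ≤ r i) := by
      intro hall
      refine Nat.not_succ_le_self _ (le_trans ha ?_)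
      rw [hi0]
      exact hall i0
    rw [if_neg hnall, mul_zero, mul_zero]
  rw [← Finset.sum_subset hsub hvanish]
  refine Finset.sum_congr rfl fun a ha => ?_
  have hall : ∀ i, a ≤ r i := by
    intro i
    have h1 := Finset.inf'_le r (Finset.mem_univ i)
    exact le_trans (Nat.lt_succ_iff.mp (Finset.mem_range.mp ha)) h1
  rw [if_pos hall]
  ring
end
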